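/- arXiv:1711.03057 — 10 statements merged into one kernel-verified Lean document; each statement's English description precedes it below -/
import Mathlib

section
/- Let p be an odd prime. If m, u, v ≥ 1 are integers, n ∈ ℤ, and u ≡ v (mod (p−1)·p^{m−1}), then M_{u,n} ≡ M_{v,n} (mod p^m). -/
open Finset

/-- `Mfun p u n = ∑_{i ∈ ℤ} C(u, i(p-1)+n)`, written as a finite sum over the
potential values `k = i(p-1)+n` with `0 ≤ k ≤ u`. -/
def Mfun (p u : ℕ) (n : ℤ) : ℤ :=
  ∑ k ∈ Finset.range (u + 1), if ((p : ℤ) - 1) ∣ ((k : ℤ) - n) then (u.choose k : ℤ) else 0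

namespace MfunAux

variable (p : ℕ)

abbrev R := AddMonoidAlgebra ℤ (ZMod (p - 1))

noncomputable def X : R p := AddMonoidAlgebra.single (1 : ZMod (p - 1)) (1 : ℤ)

noncomputable def A : R p := 1 + X p

noncomputable def S : R p := ∑ k ∈ Finset.range (p - 1), (-1 : R p) ^ k * X p ^ k

lemma Xpow (k : ℕ) : X p ^ k = AddMonoidAlgebra.single ((k : ZMod (p - 1))) (1 : ℤ) := by
  rw [X, AddMonoidAlgebra.single_pow, one_pow, nsmul_eq_mul, mul_one]

lemma Xq (hp : 1 ≤ p) : X p ^ (p - 1) = 1 := by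
  rw [Xpow, ZMod.natCast_self, AddMonoidAlgebra.one_def]

lemma AS (hp : p.Prime) (hodd : Odd p) : A p * S p = 0 := by
  have heven : Even (p - 1) := Nat.Odd.sub_odd hodd odd_one
  have h1 : A p * S p
      = ∑ k ∈ range (p - 1), ((-1 : R p) ^ k * X p ^ k - (-1 : R p) ^ (k+1) * X p ^ (k+1)) := by
    rw [S, Finset.mul_sum]
    refine Finset.sum_congr rfl fun k _ => ?_
    rw [A]; ring
  rw [h1, Finset.sum_range_sub', Xq p hp.one_le, heven.neg_one_pow]
  ring

lemma Apow (u : ℕ) : A p ^ u = ∑ k ∈ range (u + 1), ((u.choose k : R p)) * X p ^ k := by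
  rw [A, add_comm (1 : R p) (X p), add_pow]
  refine Finset.sum_congr rfl fun k _ => ?_
  rw [one_pow, mul_one, mul_comm]

lemma choose_sub_dvd (hp : p.Prime) : ∀ k, k < p → (p : ℤ) ∣ ((p-1).choose k : ℤ) - (-1)^k := by
  intro k
  induction k with
  | zero => simp
  | succ k ih =>
    intro hk1
    have hk : k < p := Nat.lt_of_succ_lt hk1
    have h1 : (p : ℤ) ∣ ((p-1).choose k : ℤ) - (-1)^k := ih hk
    have h2 : (p : ℤ) ∣ (p.choose (k+1) : ℤ) := by
      exact_mod_cast Int.natCast_dvd_natCast.2 (hp.dvd_choose_self (Nat.succ_ne_zero k) hk1)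
    have hpascal : p.choose (k+1) = (p-1).choose k + (p-1).choose (k+1) := by
      conv_lhs => rw [← Nat.succ_pred_eq_of_pos hp.pos]
      exact Nat.choose_succ_succ _ _
    have key : ((p-1).choose (k+1) : ℤ) - (-1)^(k+1)
        = ((p.choose (k+1) : ℤ)) - (((p-1).choose k : ℤ) - (-1)^k) := by
      have : (p.choose (k+1) : ℤ) = ((p-1).choose k : ℤ) + ((p-1).choose (k+1) : ℤ) := by
        exact_mod_cast congrArg (Nat.cast : ℕ → ℤ) hpascal
      rw [this]; ring
    rw [key]
    exact dvd_sub h2 h1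

lemma Aq (hp : p.Prime) : ∃ r : R p, A p ^ (p - 1) = 1 + S p + (p : R p) * r := by
  classical
  refine ⟨∑ k ∈ range (p - 1), (((((p-1).choose k : ℤ) - (-1)^k) / (p : ℤ) : ℤ) : R p) * X p ^ k, ?_⟩
  have hsum : ∑ k ∈ range (p - 1), ((p-1).choose k : R p) * X p ^ k
      = ∑ k ∈ range (p - 1), ((-1 : R p)^k * X p ^ k
          + (p : R p) * ((((((p-1).choose k : ℤ) - (-1)^k) / (p : ℤ) : ℤ) : R p) * X p ^ k)) := by
    refine Finset.sum_congr rfl fun k hk => ?_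
    have hkp : k < p := lt_of_lt_of_le (Finset.mem_range.1 hk) (Nat.sub_le p 1)
    have hdvd := choose_sub_dvd p hp k hkp
    have hdiv : (p : ℤ) * ((((p-1).choose k : ℤ) - (-1)^k) / (p : ℤ))
        = ((p-1).choose k : ℤ) - (-1)^k := Int.mul_ediv_cancel' hdvd
    have hcast : ((p-1).choose k : R p)
        = (-1 : R p)^k + (p : R p) * ((((((p-1).choose k : ℤ) - (-1)^k) / (p : ℤ)) : ℤ) : R p) := by
      have h0 : (((p-1).choose k : ℤ) : R p)
          = (((-1 : ℤ)^k + (p : ℤ) * ((((p-1).choose k : ℤ) - (-1)^k) / (p : ℤ))) : ℤ) := by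
        rw [hdiv]; push_cast; ring
      push_cast at h0 ⊢
      rw [h0]
    rw [hcast]; ring
  rw [Apow, Finset.sum_range_succ, Nat.choose_self, Nat.cast_one, one_mul, Xq p hp.one_le,
    hsum, Finset.sum_add_distrib, ← Finset.mul_sum, S]
  ring

lemma key_pow (hp : p.Prime) (r : R p) :
    ∀ j : ℕ, (p : R p) ^ (j + 1) ∣ (1 + (p : R p) * r) ^ (p ^ j) - 1 := by
  intro j
  induction j with
  | zero => exact ⟨r, by simp⟩
  | succ j ih =>
    obtain ⟨w, hw⟩ := ih
    set y := (1 + (p : R p) * r) ^ (p ^ j) with hy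
    have hyp : (1 + (p : R p) * r) ^ (p ^ (j+1)) = y ^ p := by
      rw [hy, ← pow_mul, pow_succ]
    rw [hyp]
    have hy1 : y = (y - 1) + 1 := by ring
    have hexp : y ^ p = ∑ i ∈ range (p + 1), (y - 1) ^ i * (1:R p) ^ (p - i) * (p.choose i : R p) := by
      conv_lhs => rw [hy1, add_pow]
    have hsplit : y ^ p - 1 = ∑ i ∈ range p, (y - 1) ^ (i+1) * (p.choose (i+1) : R p) := by
      rw [hexp, Finset.sum_range_succ']
      simp only [one_pow, mul_one, pow_zero, Nat.choose_zero_right, Nat.cast_one, one_mul]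
      rw [add_sub_cancel_right]
    rw [hsplit]
    refine Finset.dvd_sum fun i _ => ?_
    rcases Nat.eq_zero_or_pos i with hi | hi
    · subst hi
      simp only [zero_add, pow_one, Nat.choose_one_right]
      rw [pow_succ]
      exact mul_dvd_mul ⟨w, hw⟩ dvd_rfl
    · have h2 : (p : R p) ^ (2*(j+1)) ∣ (y-1)^(i+1) := by
        have hsq : ((p : R p)^(j+1))^2 ∣ (y-1)^2 := pow_dvd_pow_of_dvd ⟨w, hw⟩ 2
        calc (p : R p) ^ (2*(j+1)) = ((p : R p)^(j+1))^2 := by rw [← pow_mul, mul_comm]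
        _ ∣ (y-1)^2 := hsq
        _ ∣ (y-1)^(i+1) := pow_dvd_pow _ (by omega)
      exact dvd_mul_of_dvd_left (dvd_trans (pow_dvd_pow _ (by omega)) h2) _

lemma Ashift (hp : p.Prime) (hodd : Odd p) (r : R p)
    (hr : A p ^ (p-1) = 1 + S p + (p : R p) * r) :
    ∀ (u : ℕ), 1 ≤ u → ∀ k : ℕ, A p ^ (u + k*(p-1)) = A p ^ u * (1 + (p : R p)*r)^k := by
  intro u hu k
  induction k with
  | zero => simp
  | succ k ih =>
    have h1 : u + (k+1)*(p-1) = (u + k*(p-1)) + (p-1) := by ring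
    rw [h1, pow_add, ih, hr]
    obtain ⟨u', rfl⟩ : ∃ u', u = u' + 1 := ⟨u - 1, by omega⟩
    have key : A p ^ (u'+1) * S p = 0 := by
      rw [pow_succ, mul_assoc, AS p hp hodd, mul_zero]
    calc A p ^ (u'+1) * (1 + (p:R p)*r)^k * (1 + S p + (p:R p)*r)
        = A p ^ (u'+1) * (1 + (p:R p)*r)^k * (1 + (p:R p)*r)
          + (A p ^ (u'+1) * S p) * (1 + (p:R p)*r)^k := by ring
      _ = A p ^ (u'+1) * (1 + (p:R p)*r)^(k+1) := by rw [key]; ring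

lemma coeff_eq (hp : p.Prime) (u : ℕ) (n : ℤ) :
    (A p ^ u).coeff ((n : ZMod (p-1))) = Mfun p u n := by
  classical
  rw [Apow, Mfun, AddMonoidAlgebra.coeff_sum, Finset.sum_apply']
  refine Finset.sum_congr rfl fun k hk => ?_
  rw [AddMonoidAlgebra.natCast_def, Xpow, AddMonoidAlgebra.coeff_single_zero_mul,
    AddMonoidAlgebra.coeff_single, Finsupp.single_apply]
  have hcond : ((k : ℕ) : ZMod (p-1)) = ((n : ℤ) : ZMod (p-1)) ↔ ((p:ℤ)-1) ∣ ((k:ℤ) - n) := by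
    have h1 : ((k : ℕ) : ZMod (p-1)) = (((k:ℤ)) : ZMod (p-1)) := by push_cast; rfl
    rw [h1, ZMod.intCast_eq_intCast_iff, Int.modEq_iff_dvd, dvd_sub_comm,
      Nat.cast_sub hp.one_le, Nat.cast_one]
  split_ifs with hA hB hB
  · rw [mul_one]
  · exact absurd (hcond.1 hA) hB
  · exact absurd (hcond.2 hB) hA
  · rw [mul_zero]

lemma main_le (hp : p.Prime) (hodd : Odd p) (m u v : ℕ) (hm : 1 ≤ m) (hu : 1 ≤ u)
    (hdvd : ((p-1) * p^(m-1)) ∣ (v - u)) (huv : u ≤ v) (n : ℤ) :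
    (p:ℤ)^m ∣ Mfun p v n - Mfun p u n := by
  classical
  obtain ⟨r, hr⟩ := Aq p hp
  obtain ⟨t, ht⟩ := hdvd
  have hv : v = u + (p^(m-1)*t) * (p-1) := by
    have h2 : (p^(m-1)*t) * (p-1) = (p-1) * p^(m-1) * t := by ring
    omega
  have hA := Ashift p hp hodd r hr u hu (p^(m-1)*t)
  have hdv : (p : R p)^m ∣ (1 + (p:R p)*r)^(p^(m-1)*t) - 1 := by
    have h1 := key_pow p hp r (m-1)
    rw [pow_mul]
    have h2 : ((1 + (p:R p)*r)^(p^(m-1)) - 1) ∣ ((1 + (p:R p)*r)^(p^(m-1)))^t - 1 := by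
      simpa using sub_dvd_pow_sub_pow ((1 + (p:R p)*r)^(p^(m-1))) 1 t
    have hm1 : m - 1 + 1 = m := by omega
    exact (hm1 ▸ h1).trans h2
  have hdvR : (p : R p)^m ∣ A p ^ v - A p ^ u := by
    rw [hv, hA]
    have : A p ^ u * (1 + (p:R p)*r)^(p^(m-1)*t) - A p ^ u
        = A p ^ u * ((1 + (p:R p)*r)^(p^(m-1)*t) - 1) := by ring
    rw [this]
    exact hdv.mul_left _
  obtain ⟨w, hw⟩ := hdvR
  have hnat : ((p : R p))^m = AddMonoidAlgebra.single (0 : ZMod (p-1)) ((p:ℤ)^m) := by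
    rw [AddMonoidAlgebra.natCast_def, AddMonoidAlgebra.single_pow]
    simp
  rw [hnat] at hw
  have heval := congrArg (fun f : R p => f.coeff ((n : ZMod (p-1)))) hw
  have hsub : (A p ^ v - A p ^ u).coeff ((n : ZMod (p-1)))
      = (A p ^ v).coeff ((n : ZMod (p-1))) - (A p ^ u).coeff ((n : ZMod (p-1))) := by
    rw [AddMonoidAlgebra.coeff_sub, Finsupp.sub_apply]
  rw [hsub, AddMonoidAlgebra.coeff_single_zero_mul, coeff_eq p hp, coeff_eq p hp] at heval
  exact ⟨w.coeff ((n : ZMod (p-1))), heval⟩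

end MfunAux

theorem stmt_0 (p : ℕ) (hp : p.Prime) (hodd : Odd p) (m u v : ℕ) (hm : 1 ≤ m)
    (hu : 1 ≤ u) (hv : 1 ≤ v) (n : ℤ)
    (huv : (u : ℤ) ≡ (v : ℤ) [ZMOD ((p : ℤ) - 1) * (p : ℤ) ^ (m - 1)]) :
    Mfun p u n ≡ Mfun p v n [ZMOD (p : ℤ) ^ m] := by
  have hq : ((p:ℤ)-1)*(p:ℤ)^(m-1) = (((p-1)*p^(m-1) : ℕ) : ℤ) := by
    push_cast [Nat.cast_sub hp.one_le]; ring
  rcases le_total u v with h | h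
  · have hd0 : (((p-1)*p^(m-1):ℕ):ℤ) ∣ ((v - u : ℕ):ℤ) := by
      rw [Nat.cast_sub h, ← hq]
      exact huv.dvd
    have hd1 : ((p-1)*p^(m-1)) ∣ (v - u) := by exact_mod_cast hd0
    exact Int.modEq_iff_dvd.2 (MfunAux.main_le p hp hodd m u v hm hu hd1 h n)
  · have hd0 : (((p-1)*p^(m-1):ℕ):ℤ) ∣ ((u - v : ℕ):ℤ) := by
      rw [Nat.cast_sub h, ← hq]
      exact huv.symm.dvd
    have hd1 : ((p-1)*p^(m-1)) ∣ (u - v) := by exact_mod_cast hd0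
    exact (Int.modEq_iff_dvd.2 (MfunAux.main_le p hp hodd m v u hm hv hd1 h n)).symm
end

section
/- Let p be an odd prime and let u ≥ 1 be an integer, written as u = t(p−1)+s with s ∈ {1,…,p−1} and t ≥ 0. Then the p-adic valuation of the integer s·M_u − s·(1 + δ_{s=p−1}) − t·p is at least v_p(t) + 2, where δ_{s=p−1} equals 1 if s = p−1 and 0 otherwise (equivalently, M_u = 1 + δ_{s=p−1} + (t/s)·p + O(t·p²) in ℤ_p). -/
open Finset

-- unit criterion in ZMod (p^N)
lemma aux_isUnit_zmod_pow {p N : ℕ} (hp : p.Prime) (hN : N ≠ 0) (z : ZMod (p^N))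
    (h : (ZMod.castHom (dvd_pow_self p hN) (ZMod p)) z ≠ 0) : IsUnit z := by
  haveI : Fact p.Prime := ⟨hp⟩
  haveI : NeZero (p^N) := ⟨pow_ne_zero _ hp.pos.ne'⟩
  have hz : ((z.val : ℕ) : ZMod (p^N)) = z := by
    rw [ZMod.natCast_val, ZMod.cast_id]
  rw [← hz]
  rw [ZMod.isUnit_iff_coprime]
  apply Nat.Coprime.pow_right
  rw [Nat.coprime_comm]
  rw [hp.coprime_iff_not_dvd]
  intro hdvd
  apply h
  rw [ZMod.castHom_apply, ← ZMod.natCast_val, ZMod.natCast_eq_zero_iff]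
  exact hdvd

lemma aux_exists_p_mul {p N : ℕ} (hp : p.Prime) (hN : N ≠ 0) (z : ZMod (p^N))
    (h : (ZMod.castHom (dvd_pow_self p hN) (ZMod p)) z = 0) : ∃ c, z = (p : ZMod (p^N)) * c := by
  haveI : Fact p.Prime := ⟨hp⟩
  haveI : NeZero (p^N) := ⟨pow_ne_zero _ hp.pos.ne'⟩
  rw [ZMod.castHom_apply, ← ZMod.natCast_val, ZMod.natCast_eq_zero_iff] at h
  obtain ⟨c, hc⟩ := h
  refine ⟨(c : ZMod (p^N)), ?_⟩
  have hz : ((z.val : ℕ) : ZMod (p^N)) = z := by rw [ZMod.natCast_val, ZMod.cast_id]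
  rw [← hz, hc]
  push_cast
  ring

-- p^(N-1) ≡ 1 [MOD p-1]
lemma aux_pow_mod (p M : ℕ) (hp : 1 ≤ p) : p ^ M ≡ 1 [MOD p - 1] := by
  calc p ^ M ≡ 1 ^ M [MOD p - 1] := Nat.ModEq.pow M
        ((Nat.modEq_iff_dvd' hp).mpr dvd_rfl).symm
  _ = 1 := one_pow M

-- torsion element in kernel is trivial
lemma aux_ker_triv {p N : ℕ} (hp : p.Prime) (hN : N ≠ 0)
    (x : (ZMod (p^N))ˣ) (hx : x ^ (p - 1) = 1)
    (hker : ZMod.unitsMap (dvd_pow_self p hN) x = 1) : x = 1 := by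
  haveI : Fact p.Prime := ⟨hp⟩
  haveI : NeZero (p^N) := ⟨pow_ne_zero _ hp.pos.ne'⟩
  -- x = x ^ (p ^ (N-1))
  have h1 : x ^ (p ^ (N - 1)) = x := by
    obtain ⟨k, hk⟩ := (Nat.modEq_iff_dvd' (Nat.one_le_pow _ _ hp.pos)).mp
      (aux_pow_mod p (N-1) hp.one_lt.le).symm
    have hone : 1 ≤ p ^ (N - 1) := Nat.one_le_pow _ _ hp.pos
    have : p ^ (N - 1) = 1 + (p - 1) * k := by omega
    rw [this, pow_add, pow_one, pow_mul, hx, one_pow, mul_one]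
  -- lift (x : ZMod (p^N)) to an integer a with p ∣ a - 1
  set a : ℤ := ((x : ZMod (p^N)).val : ℤ) with ha
  have hcast : ((a : ℤ) : ZMod (p^N)) = (x : ZMod (p^N)) := by
    rw [ha]; push_cast; rw [ZMod.natCast_val, ZMod.cast_id]
  have hker' : ((a : ℤ) : ZMod p) = 1 := by
    have := congrArg (Units.val) hker
    have h2 : (ZMod.castHom (dvd_pow_self p hN) (ZMod p)) (x : ZMod (p^N)) = 1 := this
    rw [ZMod.castHom_apply, ← ZMod.natCast_val] at h2
    rw [ha]; push_cast; exact h2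
  have hdvd : (p : ℤ) ∣ a - 1 := by
    rwa [← ZMod.intCast_zmod_eq_zero_iff_dvd, Int.cast_sub, Int.cast_one, sub_eq_zero]
  have hdvd2 : ((p : ℤ) ^ ((N - 1) + 1)) ∣ a ^ (p ^ (N-1)) - 1 ^ (p ^ (N-1)) := by
    have := dvd_sub_pow_of_dvd_sub (R := ℤ) (p := p) (a := a) (b := 1) hdvd (N - 1)
    exact_mod_cast this
  have hN1 : (N - 1) + 1 = N := by omega
  rw [hN1, one_pow] at hdvd2
  have h3 : ((x : ZMod (p^N))) ^ (p ^ (N-1)) = 1 := by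
    have : ((a ^ (p ^ (N-1)) : ℤ) : ZMod (p^N)) = ((1 : ℤ) : ZMod (p^N)) := by
      rw [← sub_eq_zero, ← Int.cast_sub, ZMod.intCast_zmod_eq_zero_iff_dvd]
      exact_mod_cast hdvd2
    rw [Int.cast_pow, hcast, Int.cast_one] at this
    exact this
  apply Units.ext
  rw [← h1]
  push_cast
  exact h3

lemma aux_exists_gen {p N : ℕ} (hp : p.Prime) (hN : N ≠ 0) :
    ∃ h : (ZMod (p^N))ˣ, h ^ (p - 1) = 1 ∧
      orderOf (ZMod.unitsMap (dvd_pow_self p hN) h) = p - 1 ∧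
      ∀ a : (ZMod p)ˣ, ∃ j : ℕ, (ZMod.unitsMap (dvd_pow_self p hN) h) ^ j = a := by
  haveI : Fact p.Prime := ⟨hp⟩
  haveI : NeZero (p^N) := ⟨pow_ne_zero _ hp.pos.ne'⟩
  obtain ⟨g, hg⟩ := IsCyclic.exists_generator (α := (ZMod p)ˣ)
  have hog : orderOf g = p - 1 := by
    rw [orderOf_eq_card_of_forall_mem_zpowers hg, Nat.card_eq_fintype_card, ZMod.card_units]
  obtain ⟨w, hw⟩ := ZMod.unitsMap_surjective (dvd_pow_self p hN) g
  refine ⟨w ^ (p ^ (N - 1)), ?_, ?_, ?_⟩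
  · rw [← pow_mul]
    have hcard : Fintype.card (ZMod (p^N))ˣ = p ^ (N - 1) * (p - 1) := by
      rw [ZMod.card_units_eq_totient, Nat.totient_prime_pow hp (Nat.pos_of_ne_zero hN)]
    rw [← hcard]; exact pow_card_eq_one
  · rw [map_pow, hw]
    have : g ^ (p ^ (N - 1)) = g ^ 1 := by
      rw [pow_eq_pow_iff_modEq, hog]
      exact aux_pow_mod p (N - 1) hp.one_lt.le
    rw [this, pow_one, hog]
  · intro a
    rw [map_pow, hw]
    have : g ^ (p ^ (N - 1)) = g ^ 1 := by
      rw [pow_eq_pow_iff_modEq, hog]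
      exact aux_pow_mod p (N - 1) hp.one_lt.le
    rw [this, pow_one]
    have ha := hg a
    rw [← mem_powers_iff_mem_zpowers] at ha
    obtain ⟨j, hj⟩ := ha
    exact ⟨j, hj⟩

lemma aux_inj {p N : ℕ} (hp : p.Prime) (hN : N ≠ 0)
    (x y : (ZMod (p^N))ˣ) (hx : x ^ (p-1) = 1) (hy : y ^ (p-1) = 1)
    (hxy : ZMod.unitsMap (dvd_pow_self p hN) x = ZMod.unitsMap (dvd_pow_self p hN) y) :
    x = y := by
  have h1 : (x * y⁻¹) ^ (p - 1) = 1 := by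
    rw [mul_pow, hx, inv_pow, hy, inv_one, mul_one]
  have h2 : ZMod.unitsMap (dvd_pow_self p hN) (x * y⁻¹) = 1 := by
    rw [map_mul, map_inv, hxy, mul_inv_cancel]
  have := aux_ker_triv hp hN _ h1 h2
  rwa [mul_inv_eq_one] at this

lemma aux_card_H {p N : ℕ} [NeZero (p^N)] (hp : p.Prime) (hN : N ≠ 0) :
    (univ.filter (fun x : (ZMod (p^N))ˣ => x ^ (p-1) = 1)).card = p - 1 := by
  haveI : Fact p.Prime := ⟨hp⟩
  obtain ⟨h, hh1, hh2, hh3⟩ := aux_exists_gen hp hN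
  have : (univ.filter (fun x : (ZMod (p^N))ˣ => x ^ (p-1) = 1)).card
      = (univ : Finset (ZMod p)ˣ).card := by
    apply Finset.card_bij (fun a _ => ZMod.unitsMap (dvd_pow_self p hN) a)
    · intro a _; exact mem_univ _
    · intro a ha b hb hab
      rw [mem_filter] at ha hb
      exact aux_inj hp hN a b ha.2 hb.2 hab
    · intro b _
      obtain ⟨j, hj⟩ := hh3 b
      refine ⟨h ^ j, ?_, ?_⟩
      · rw [mem_filter]
        refine ⟨mem_univ _, ?_⟩
        rw [← pow_mul, mul_comm, pow_mul, hh1, one_pow]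
      · rw [map_pow]; exact hj
  rw [this, card_univ, ZMod.card_units]

lemma aux_powsum {p N : ℕ} [NeZero (p^N)] (hp : p.Prime) (hN : N ≠ 0) (k : ℕ) :
    ∑ x ∈ (univ.filter (fun x : (ZMod (p^N))ˣ => x ^ (p-1) = 1)),
      ((x : ZMod (p^N)))^k
      = if (p-1) ∣ k then ((p - 1 : ℕ) : ZMod (p^N)) else 0 := by
  haveI : Fact p.Prime := ⟨hp⟩
  set H := (univ.filter (fun x : (ZMod (p^N))ˣ => x ^ (p-1) = 1)) with hH
  by_cases hdvd : (p-1) ∣ k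
  · rw [if_pos hdvd]
    obtain ⟨m, rfl⟩ := hdvd
    have : ∀ x ∈ H, ((x : ZMod (p^N)))^((p-1)*m) = 1 := by
      intro x hx
      rw [hH, mem_filter] at hx
      have : x ^ ((p-1)*m) = 1 := by rw [pow_mul, hx.2, one_pow]
      calc ((x : ZMod (p^N)))^((p-1)*m) = ((x ^ ((p-1)*m) : (ZMod (p^N))ˣ) : ZMod (p^N)) := by
            push_cast; ring
      _ = 1 := by rw [this, Units.val_one]
    rw [Finset.sum_congr rfl this, Finset.sum_const, aux_card_H hp hN, nsmul_eq_mul, mul_one]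
  · rw [if_neg hdvd]
    obtain ⟨h, hh1, hh2, _⟩ := aux_exists_gen hp hN
    have hhH : h ∈ H := by rw [hH, mem_filter]; exact ⟨mem_univ _, hh1⟩
    -- h^k - 1 is a unit
    have hunit : IsUnit (((h : ZMod (p^N)))^k - 1) := by
      apply aux_isUnit_zmod_pow hp hN
      rw [map_sub, map_pow, map_one]
      intro hzero
      rw [sub_eq_zero] at hzero
      have : (ZMod.unitsMap (dvd_pow_self p hN) h) ^ k = 1 := by
        apply Units.ext
        push_cast
        calc ((ZMod.unitsMap (dvd_pow_self p hN) h : ZMod p))^k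
            = (ZMod.castHom (dvd_pow_self p hN) (ZMod p)) (h : ZMod (p^N)) ^ k := rfl
        _ = 1 := hzero
      rw [← orderOf_dvd_iff_pow_eq_one, hh2] at this
      exact hdvd this
    -- reindexing by multiplication by h
    have hre : ∑ x ∈ H, ((h * x : (ZMod (p^N))ˣ) : ZMod (p^N))^k
        = ∑ x ∈ H, ((x : ZMod (p^N)))^k := by
      apply Finset.sum_nbij' (fun x => h * x) (fun x => h⁻¹ * x)
      · intro a ha
        rw [hH, mem_filter] at ha ⊢
        exact ⟨mem_univ _, by rw [mul_pow, hh1, one_mul, ha.2]⟩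
      · intro a ha
        rw [hH, mem_filter] at ha ⊢
        refine ⟨mem_univ _, ?_⟩
        rw [mul_pow, inv_pow, hh1, inv_one, one_mul, ha.2]
      · intro a _; rw [inv_mul_cancel_left]
      · intro a _; rw [mul_inv_cancel_left]
      · intro a _; rfl
    have hfactor : ∀ x : (ZMod (p^N))ˣ,
        ((h * x : (ZMod (p^N))ˣ) : ZMod (p^N))^k
          = ((h : ZMod (p^N)))^k * ((x : ZMod (p^N)))^k := by
      intro x; push_cast; ring
    rw [Finset.sum_congr rfl (fun x _ => hfactor x), ← Finset.mul_sum] at hre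
    have : (((h : ZMod (p^N)))^k - 1) * (∑ x ∈ H, ((x : ZMod (p^N)))^k) = 0 := by
      rw [sub_mul, one_mul, hre, sub_self]
    rwa [hunit.mul_right_eq_zero] at this

lemma Mfun_eq_nat (p : ℕ) (hp : 1 ≤ p) (m : ℕ) :
    Mfun p m 0 = ∑ k ∈ range (m+1), if (p-1) ∣ k then (m.choose k : ℤ) else 0 := by
  unfold Mfun
  apply Finset.sum_congr rfl
  intro k _
  apply if_congr _ rfl rfl
  rw [sub_zero, show ((p : ℤ) - 1) = ((p - 1 : ℕ) : ℤ) by push_cast [hp]; ring]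
  exact Int.natCast_dvd_natCast

lemma Mfun_small {p s : ℕ} (hp : p.Prime) (hodd : Odd p) (hs1 : 1 ≤ s) (hs2 : s ≤ p - 1) :
    Mfun p s 0 = 1 + (if s = p - 1 then 1 else 0) := by
  have hp3 : 3 ≤ p := by
    have h2 := hp.two_le
    have h3 := Nat.odd_iff.mp hodd
    omega
  rw [Mfun_eq_nat p hp.pos s]
  have key : ∀ k ∈ range (s+1),
      (if (p-1) ∣ k then (s.choose k : ℤ) else 0)
        = (if k = 0 then 1 else 0)
          + (if s = p - 1 then (if k = p - 1 then 1 else 0) else 0) := by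
    intro k hk
    rw [mem_range] at hk
    by_cases hd : (p-1) ∣ k
    · obtain ⟨m, hm⟩ := hd
      have hm2 : m ≤ 1 := by nlinarith
      interval_cases m
      · simp only [Nat.mul_zero] at hm
        subst hm
        rw [if_pos (dvd_zero _), if_pos rfl, Nat.choose_zero_right]
        by_cases hsp : s = p - 1
        · rw [if_pos hsp, if_neg (by omega)]; ring
        · rw [if_neg hsp]; ring
      · rw [Nat.mul_one] at hm
        subst hm
        have hsp : s = p - 1 := by omega
        subst hsp
        rw [if_pos (dvd_refl _), if_neg (by omega), if_pos rfl, if_pos rfl,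
          Nat.choose_self]
        push_cast
    · rw [if_neg hd, if_neg (by rintro rfl; exact hd (dvd_zero _))]
      by_cases hsp : s = p - 1
      · rw [if_pos hsp, if_neg (by rintro rfl; exact hd (dvd_refl _))]; ring
      · rw [if_neg hsp]; ring
  rw [Finset.sum_congr rfl key, Finset.sum_add_distrib]
  congr 1
  · simp
  · by_cases hsp : s = p - 1
    · simp only [if_pos hsp]
      rw [Finset.sum_ite_eq' (range (s+1)) (p-1) (fun _ => (1:ℤ))]
      rw [if_pos (by rw [mem_range]; omega)]
    · simp [hsp]

lemma Mfun_mid {p s : ℕ} (hp : p.Prime) (hodd : Odd p) (hs1 : 1 ≤ s) (hs2 : s ≤ p - 1) :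
    Mfun p (p-1+s) 0 = 1 + (if s = p - 1 then 1 else 0) + ((p-1+s).choose (p-1) : ℤ) := by
  have hp3 : 3 ≤ p := by
    have h2 := hp.two_le
    have h3 := Nat.odd_iff.mp hodd
    omega
  rw [Mfun_eq_nat p hp.pos (p-1+s)]
  have key : ∀ k ∈ range (p-1+s+1),
      (if (p-1) ∣ k then ((p-1+s).choose k : ℤ) else 0)
        = (if k = 0 then 1 else 0)
          + (if k = p-1 then ((p-1+s).choose (p-1) : ℤ) else 0)
          + (if s = p - 1 then (if k = 2*(p-1) then 1 else 0) else 0) := by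
    intro k hk
    rw [mem_range] at hk
    by_cases hd : (p-1) ∣ k
    · obtain ⟨m, hm⟩ := hd
      have hm2 : m ≤ 2 := by nlinarith
      interval_cases m
      · simp only [Nat.mul_zero] at hm
        subst hm
        rw [if_pos (dvd_zero _), if_pos rfl, Nat.choose_zero_right,
          if_neg (by omega)]
        by_cases hsp : s = p - 1
        · rw [if_pos hsp, if_neg (by omega)]; ring
        · rw [if_neg hsp]; ring
      · rw [Nat.mul_one] at hm
        subst hm
        rw [if_pos (dvd_refl _), if_neg (by omega), if_pos rfl]
        by_cases hsp : s = p - 1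
        · rw [if_pos hsp, if_neg (by omega)]; ring
        · rw [if_neg hsp]; ring
      · subst hm
        have hsp : s = p - 1 := by omega
        have hn : (p-1) * 2 = p - 1 + s := by omega
        rw [if_pos (dvd_mul_right (p-1) 2), hn, Nat.choose_self,
          if_neg (by omega), if_neg (by omega), if_pos hsp, if_pos (by omega)]
        push_cast
    · rw [if_neg hd, if_neg (by rintro rfl; exact hd (dvd_zero _)),
        if_neg (by rintro rfl; exact hd (dvd_refl _))]
      by_cases hsp : s = p - 1
      · rw [if_pos hsp, if_neg (by rintro rfl; exact hd (dvd_mul_left (p-1) 2))]; ring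
      · rw [if_neg hsp]; ring
  rw [Finset.sum_congr rfl key, Finset.sum_add_distrib, Finset.sum_add_distrib]
  have h1 : ∑ k ∈ range (p-1+s+1), (if k = 0 then (1:ℤ) else 0) = 1 := by simp
  have h2 : ∑ k ∈ range (p-1+s+1), (if k = p-1 then ((p-1+s).choose (p-1) : ℤ) else 0)
      = ((p-1+s).choose (p-1) : ℤ) := by
    rw [Finset.sum_ite_eq' (range (p-1+s+1)) (p-1) (fun _ => ((p-1+s).choose (p-1) : ℤ)),
      if_pos (by rw [mem_range]; omega)]
  have h3 : ∑ k ∈ range (p-1+s+1), (if s = p-1 then (if k = 2*(p-1) then (1:ℤ) else 0) else 0)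
      = (if s = p-1 then 1 else 0) := by
    by_cases hsp : s = p - 1
    · simp only [if_pos hsp]
      rw [Finset.sum_ite_eq' (range (p-1+s+1)) (2*(p-1)) (fun _ => (1:ℤ)),
        if_pos (by rw [mem_range]; omega)]
    · simp [hsp]
  rw [h1, h2, h3]
  ring

lemma aux_three_pow (w : ℕ) (hw : 1 ≤ w) : w + 2 ≤ 3 ^ w := by
  induction w with
  | zero => omega
  | succ n ih =>
    rcases Nat.eq_zero_or_pos n with h | h
    · subst h; norm_num
    · have := ih h
      have h3 : 3^(n+1) = 3 * 3^n := by ring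
      omega

lemma aux_choose_pow {p : ℕ} (hp : p.Prime) (hp3 : 3 ≤ p) (t j : ℕ) (ht : t ≠ 0) (hj : 2 ≤ j) :
    p ^ (padicValNat p t + 2) ∣ t.choose j * p ^ j := by
  haveI : Fact p.Prime := ⟨hp⟩
  by_cases hjt : j ≤ t
  · have hC : t.choose j ≠ 0 := (Nat.choose_pos hjt).ne'
    set v := padicValNat p t with hv
    set w := padicValNat p j with hww
    have hw2 : w + 2 ≤ j := by
      rcases Nat.eq_zero_or_pos w with h | h
      · omega
      · have h1 : p ^ w ∣ j := pow_padicValNat_dvd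
        have h2 : p ^ w ≤ j := Nat.le_of_dvd (by omega) h1
        have h3 : 3 ^ w ≤ p ^ w := Nat.pow_le_pow_left hp3 w
        have h4 := aux_three_pow w h
        omega
    have hkey : v ≤ w + padicValNat p (t.choose j) := by
      obtain ⟨t', rfl⟩ : ∃ t', t = t' + 1 := ⟨t - 1, by omega⟩
      obtain ⟨j', rfl⟩ : ∃ j', j = j' + 1 := ⟨j - 1, by omega⟩
      have hid : (t' + 1) * t'.choose j' = (t'+1).choose (j'+1) * (j'+1) :=
        Nat.add_one_mul_choose_eq t' j'
      have hC' : t'.choose j' ≠ 0 := (Nat.choose_pos (by omega)).ne'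
      have hval := congrArg (padicValNat p) hid
      rw [padicValNat.mul (by omega) hC', padicValNat.mul hC (by omega)] at hval
      omega
    calc p ^ (v + 2) ∣ p ^ (padicValNat p (t.choose j) + j) :=
          pow_dvd_pow p (by omega)
    _ = p ^ (padicValNat p (t.choose j)) * p ^ j := pow_add p _ _
    _ ∣ t.choose j * p ^ j := mul_dvd_mul pow_padicValNat_dvd dvd_rfl
  · rw [Nat.choose_eq_zero_of_lt (by omega), Nat.zero_mul]
    exact dvd_zero _

lemma aux_asc_prod (n k : ℕ) : n.ascFactorial k = ∏ i ∈ range k, (n + i) := by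
  induction k with
  | zero => simp [Nat.ascFactorial_zero]
  | succ m ih => rw [Nat.ascFactorial_succ, prod_range_succ, ih, mul_comm]

lemma aux_L2 {p s : ℕ} (hp : p.Prime) (hs1 : 1 ≤ s) (hs2 : s ≤ p - 1) :
    (p:ℤ)^2 ∣ (s:ℤ) * (((p-1+s).choose (p-1) : ℕ) : ℤ) - p := by
  haveI : Fact p.Prime := ⟨hp⟩
  have hp2 := hp.two_le
  have hsymm : (p-1+s).choose (p-1) = (p-1+s).choose s := by
    have h := Nat.choose_symm (Nat.le_add_left s (p-1))
    rwa [Nat.add_sub_cancel] at h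
  rw [hsymm]
  have hasc : p.ascFactorial s = Nat.factorial s * (p-1+s).choose s := by
    have h := Nat.ascFactorial_eq_factorial_mul_choose (p-1) s
    rwa [show p - 1 + 1 = p by omega] at h
  obtain ⟨s', rfl⟩ : ∃ s', s = s' + 1 := ⟨s-1, by omega⟩
  have hprod : p.ascFactorial (s'+1) = (∏ i ∈ range s', (p + (i+1))) * p := by
    rw [aux_asc_prod, Finset.prod_range_succ']
    simp
  set Q : ℕ := ∏ i ∈ range s', (p + (i+1)) with hQdef
  have hQ : ((Q:ℤ) : ZMod p) = ((Nat.factorial s' : ℕ) : ZMod p) := by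
    rw [hQdef]
    push_cast
    rw [← Finset.prod_range_add_one_eq_factorial]
    push_cast
    apply Finset.prod_congr rfl
    intro i _
    rw [ZMod.natCast_self]
    ring
  have hQ2 : (p:ℤ) ∣ (Q:ℤ) - (Nat.factorial s' : ℤ) := by
    rw [← ZMod.intCast_zmod_eq_zero_iff_dvd]
    push_cast
    rw [sub_eq_zero]
    exact_mod_cast hQ
  obtain ⟨q, hq⟩ := hQ2
  have hmain : ((Nat.factorial (s'+1) : ℕ) : ℤ) * (((p-1+(s'+1)).choose (s'+1) : ℕ) : ℤ)
      = (p : ℤ) * Q := by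
    have : Nat.factorial (s'+1) * (p-1+(s'+1)).choose (s'+1) = Q * p := by rw [← hasc, hprod]
    exact_mod_cast (by rw [this]; ring : (Nat.factorial (s'+1) * (p-1+(s'+1)).choose (s'+1) : ℕ) = (p * Q : ℕ))
  have hfact : ((Nat.factorial (s'+1) : ℕ) : ℤ) = ((s'+1 : ℕ) : ℤ) * ((Nat.factorial s' : ℕ) : ℤ) := by
    exact_mod_cast congrArg (Nat.cast (R := ℤ)) (Nat.factorial_succ s')
  have hcop : IsCoprime ((p:ℤ)^2) ((Nat.factorial s' : ℕ) : ℤ) := by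
    have h1 : ¬ p ∣ Nat.factorial s' := by
      rw [hp.dvd_factorial]
      omega
    have h2 : Nat.Coprime (p^2) (Nat.factorial s') :=
      Nat.Coprime.pow_left 2 ((Nat.Prime.coprime_iff_not_dvd hp).mpr h1)
    exact_mod_cast Nat.isCoprime_iff_coprime.mpr h2
  apply hcop.dvd_of_dvd_mul_left
  refine ⟨q, ?_⟩
  push_cast at hmain hfact hq ⊢
  linear_combination hmain - hfact * (((p-1+(s'+1)).choose (s'+1) : ℕ) : ℤ) + (p:ℤ) * hq

lemma aux_L1 {p : ℕ} (hp : p.Prime) (hodd : Odd p) {N : ℕ} (hN : N ≠ 0)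
    (t s : ℕ) (ht : t ≠ 0) (hs1 : 1 ≤ s)
    (hchoose : ∀ j, 2 ≤ j → (p:ℤ)^N ∣ (t.choose j : ℤ) * (p:ℤ)^j) :
    (p:ℤ)^N ∣ Mfun p (t*(p-1)+s) 0 - Mfun p s 0
      - (t:ℤ) * (Mfun p (p-1+s) 0 - Mfun p s 0) := by
  haveI : Fact p.Prime := ⟨hp⟩
  haveI : NeZero (p^N) := ⟨pow_ne_zero _ hp.pos.ne'⟩
  have hp3 : 3 ≤ p := by
    have h2 := hp.two_le
    have h3 := Nat.odd_iff.mp hodd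
    omega
  set R := ZMod (p^N) with hR
  set H : Finset (ZMod (p^N))ˣ := univ.filter (fun x => x ^ (p-1) = 1) with hHdef
  -- Step A : full sums
  have hA : ∀ m : ℕ, ∑ x ∈ H, ((x : R) + 1)^m
      = ((p-1 : ℕ) : R) * ((Mfun p m 0 : ℤ) : R) := by
    intro m
    have hx : ∀ x ∈ H, ((x : R)+1)^m
        = ∑ k ∈ range (m+1), (x : R)^k * ((m.choose k : ℕ) : R) := by
      intro x _
      rw [add_pow]
      apply Finset.sum_congr rfl
      intro k _
      rw [one_pow, mul_one]
    rw [Finset.sum_congr rfl hx, Finset.sum_comm]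
    have hk : ∀ k ∈ range (m+1), ∑ x ∈ H, (x : R)^k * ((m.choose k : ℕ) : R)
        = (if (p-1) ∣ k then ((p-1:ℕ) : R) * ((m.choose k : ℕ) : R) else 0) := by
      intro k _
      rw [← Finset.sum_mul, aux_powsum hp hN k, ite_mul, zero_mul]
    rw [Finset.sum_congr rfl hk]
    have hM : ((Mfun p m 0 : ℤ) : R)
        = ∑ k ∈ range (m+1), (if (p-1) ∣ k then ((m.choose k : ℕ) : R) else 0) := by
      rw [Mfun_eq_nat p hp.pos m]
      push_cast [apply_ite (fun z : ℤ => (z : R))]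
      simp only [R, Int.cast_sum, Int.cast_ite, Int.cast_natCast, Int.cast_zero]
    rw [hM, Finset.mul_sum]
    apply Finset.sum_congr rfl
    intro k _
    rw [mul_ite, mul_zero]
  -- -1 belongs to H
  have hev : Even (p - 1) := Nat.Odd.sub_odd hodd odd_one
  have hneg1H : (-1 : (ZMod (p^N))ˣ) ∈ H := by
    rw [hHdef, mem_filter]
    exact ⟨mem_univ _, hev.neg_one_pow⟩
  -- sums over H minus the -1 element
  have hsum_erase : ∀ m : ℕ, 1 ≤ m → ∑ x ∈ H.erase (-1), ((x : R)+1)^m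
      = ((p-1 : ℕ) : R) * ((Mfun p m 0 : ℤ) : R) := by
    intro m hm
    rw [← hA m, ← Finset.sum_erase_add H _ hneg1H]
    have : (((-1 : (ZMod (p^N))ˣ) : R) + 1)^m = 0 := by
      rw [Units.val_neg, Units.val_one, neg_add_cancel, zero_pow (by omega)]
    rw [this, add_zero]
  -- reduction mod p of x+1 is nonzero for x in H.erase (-1)
  have hred : ∀ x ∈ H.erase (-1),
      (ZMod.castHom (dvd_pow_self p hN) (ZMod p)) ((x : R) + 1) ≠ 0 := by
    intro x hx h0
    rw [Finset.mem_erase, hHdef, mem_filter] at hx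
    obtain ⟨hxne, _, hxH⟩ := hx
    apply hxne
    have hval : (ZMod.castHom (dvd_pow_self p hN) (ZMod p)) ((x : R))
        = -1 := by
      rw [map_add, map_one] at h0
      exact eq_neg_of_add_eq_zero_left h0
    have hmapeq : ZMod.unitsMap (dvd_pow_self p hN) x
        = ZMod.unitsMap (dvd_pow_self p hN) (-1) := by
      apply Units.ext
      show (ZMod.castHom (dvd_pow_self p hN) (ZMod p)) ((x : R))
        = (ZMod.castHom (dvd_pow_self p hN) (ZMod p)) (((-1 : (ZMod (p^N))ˣ) : R))
      rw [hval, Units.val_neg, Units.val_one, map_neg, map_one]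
    exact aux_inj hp hN x (-1) hxH hev.neg_one_pow hmapeq
  -- the lambda decomposition
  have hplam : ∀ x ∈ H.erase (-1), ∃ lam : R,
      ((x : R)+1)^(p-1) = 1 + (p : R) * lam := by
    intro x hx
    have h0 : (ZMod.castHom (dvd_pow_self p hN) (ZMod p)) (((x : R)+1)^(p-1) - 1) = 0 := by
      rw [map_sub, map_pow, map_one, ZMod.pow_card_sub_one_eq_one (hred x hx), sub_self]
    obtain ⟨c, hc⟩ := aux_exists_p_mul hp hN _ h0
    exact ⟨c, by rw [← hc]; ring⟩
  -- per-element expansion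
  have hper : ∀ x ∈ H.erase (-1), ((x : R)+1)^(t*(p-1)+s)
      = ((x : R)+1)^s + (t : R) * (((x : R)+1)^(p-1+s) - ((x : R)+1)^s) := by
    intro x hx
    obtain ⟨lam, hlam⟩ := hplam x hx
    have h1 : ((x : R)+1)^(t*(p-1)+s) = (1 + (p:R)*lam)^t * ((x : R)+1)^s := by
      rw [pow_add, mul_comm t (p-1), pow_mul, hlam]
    have h2 : (1 + (p:R)*lam)^t = 1 + (t : R) * ((p:R)*lam) := by
      rw [add_comm (1 : R), add_pow]
      have hsplit : ∑ k ∈ range (t+1), ((p:R)*lam)^k * 1^(t-k) * ((t.choose k : ℕ) : R)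
          = ∑ k ∈ Finset.Ico 0 2, ((p:R)*lam)^k * 1^(t-k) * ((t.choose k : ℕ) : R)
          + ∑ k ∈ Finset.Ico 2 (t+1), ((p:R)*lam)^k * 1^(t-k) * ((t.choose k : ℕ) : R) := by
        rw [Finset.range_eq_Ico,
          Finset.sum_Ico_consecutive _ (by omega : 0 ≤ 2) (by omega : 2 ≤ t+1)]
      rw [hsplit]
      have hz : ∑ k ∈ Finset.Ico 2 (t+1), ((p:R)*lam)^k * 1^(t-k) * ((t.choose k : ℕ) : R)
          = 0 := by
        apply Finset.sum_eq_zero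
        intro k hk
        rw [Finset.mem_Ico] at hk
        have hzz : ((t.choose k : ℕ) : R) * ((p:R))^k = 0 := by
          have : (((t.choose k : ℤ) * (p:ℤ)^k : ℤ) : R) = 0 := by
            rw [ZMod.intCast_zmod_eq_zero_iff_dvd]
            push_cast
            exact hchoose k hk.1
          push_cast at this
          simpa [R] using this
        rw [mul_pow, one_pow, mul_one]
        calc (p:R)^k * lam^k * ((t.choose k : ℕ) : R)
            = (((t.choose k : ℕ) : R) * ((p:R))^k) * lam^k := by ring
        _ = 0 := by rw [hzz, zero_mul]
      rw [hz, add_zero]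
      rw [Finset.range_eq_Ico] at *
      have : Finset.Ico 0 2 = {0, 1} := by decide
      rw [this, Finset.sum_insert (by decide), Finset.sum_singleton]
      simp [Nat.choose_one_right]
      ring
    rw [h1, h2]
    have h3 : (p:R)*lam = ((x : R)+1)^(p-1) - 1 := by rw [hlam]; ring
    rw [h3, pow_add]
    ring
  -- main computation
  set u := t*(p-1)+s with hu
  have hu1 : 1 ≤ u := by omega
  have main : ((p-1 : ℕ) : R) * ((Mfun p u 0 : ℤ) : R)
      = ((p-1 : ℕ) : R) * (((Mfun p s 0 + t * (Mfun p (p-1+s) 0 - Mfun p s 0)) : ℤ) : R) := by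
    rw [← hsum_erase u hu1, Finset.sum_congr rfl hper, Finset.sum_add_distrib,
      ← Finset.mul_sum, Finset.sum_sub_distrib, hsum_erase s (by omega),
      hsum_erase (p-1+s) (by omega)]
    push_cast
    simp only [R, Int.cast_sub, Int.cast_mul, Int.cast_natCast]
    ring
  have hunit : IsUnit ((p-1 : ℕ) : R) := by
    apply aux_isUnit_zmod_pow hp hN
    rw [map_natCast]
    rw [Ne, ZMod.natCast_eq_zero_iff]
    intro hdd
    have := Nat.le_of_dvd (by omega) hdd
    omega
  have hcancel := hunit.mul_left_cancel main
  rw [← sub_eq_zero, ← Int.cast_sub, ZMod.intCast_zmod_eq_zero_iff_dvd] at hcancel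
  push_cast at hcancel
  convert hcancel using 1
  push_cast
  ring

/-- `M_u = 1 + δ_{s=p-1} + (t/s)p + O(tp²)`: the p-adic valuation of
`s·M_u − s·(1+δ_{s=p-1}) − t·p` is at least `v_p(t) + 2` (with `v_p(0) = ∞`). -/
theorem stmt_1 (p : ℕ) (hp : p.Prime) (hodd : Odd p) (u t s : ℕ)
    (hu : 1 ≤ u) (hs1 : 1 ≤ s) (hs2 : s ≤ p - 1) (hust : u = t * (p - 1) + s) :
    (t = 0 →
      (s : ℤ) * Mfun p u 0 - (s : ℤ) * (1 + if s = p - 1 then 1 else 0) - (t : ℤ) * p = 0) ∧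
    (t ≠ 0 →
      ((p : ℤ) ^ (padicValNat p t + 2) ∣
        (s : ℤ) * Mfun p u 0 - (s : ℤ) * (1 + if s = p - 1 then 1 else 0) - (t : ℤ) * p)) := by
  haveI : Fact p.Prime := ⟨hp⟩
  have hp3 : 3 ≤ p := by
    have h2 := hp.two_le
    have h3 := Nat.odd_iff.mp hodd
    omega
  subst hust
  constructor
  · rintro rfl
    rw [show 0 * (p-1) + s = s by omega, Mfun_small hp hodd hs1 hs2]
    push_cast
    ring
  · intro ht
    set v := padicValNat p t with hv
    have hchoose' : ∀ j, 2 ≤ j → (p:ℤ)^(v+2) ∣ (t.choose j : ℤ) * (p:ℤ)^j := by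
      intro j hj
      have := aux_choose_pow hp hp3 t j ht hj
      have h2 : ((p ^ (v+2) : ℕ) : ℤ) ∣ ((t.choose j * p ^ j : ℕ) : ℤ) :=
        Int.natCast_dvd_natCast.mpr this
      push_cast at h2
      exact h2
    obtain ⟨a, ha⟩ := aux_L1 hp hodd (N := v + 2) (by omega) t s ht hs1 hchoose'
    obtain ⟨b, hb⟩ := aux_L2 hp hs1 hs2
    obtain ⟨c, hc⟩ := pow_padicValNat_dvd (p := p) (n := t)
    have htv : (t : ℤ) = (p:ℤ)^v * (c : ℤ) := by exact_mod_cast congrArg (Nat.cast (R := ℤ)) hc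
    rw [Mfun_small hp hodd hs1 hs2, Mfun_mid hp hodd hs1 hs2] at ha
    refine ⟨(s:ℤ) * a + (c:ℤ) * b, ?_⟩
    linear_combination (s:ℤ) * ha + (t:ℤ) * hb + ((p:ℤ)^2 * b) * htv
end

section
/- Let p be an odd prime, u ≥ 1 an integer, and n ≤ 0 an integer. Then M_{u,n} = ∑_{i=0}^{−n} (−1)^i · C(−n, i) · M_{u−n−i, 0}. -/
open Finset

lemma pascalM (p u : ℕ) (n : ℤ) : Mfun p (u+1) n = Mfun p u n + Mfun p u (n-1) := by
  unfold Mfun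
  rw [Finset.sum_range_succ' _ (u+1)]
  have h1 : ∀ k ∈ Finset.range (u+1),
      (if ((p:ℤ)-1) ∣ (((k+1 : ℕ)) : ℤ) - n then (((u+1).choose (k+1) : ℕ) : ℤ) else 0)
      = (if ((p:ℤ)-1) ∣ ((k:ℤ) - (n-1)) then (u.choose k : ℤ) else 0)
        + (if ((p:ℤ)-1) ∣ (((k+1:ℕ)):ℤ) - n then (u.choose (k+1) : ℤ) else 0) := by
    intro k _
    have he : (((k+1:ℕ)):ℤ) - n = (k:ℤ) - (n-1) := by push_cast; ring
    rw [Nat.choose_succ_succ]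
    rw [he]
    split <;> push_cast <;> ring
  rw [Finset.sum_congr rfl h1, Finset.sum_add_distrib]
  have h2 : (∑ k ∈ Finset.range (u+1),
      if ((p:ℤ)-1) ∣ (((k+1:ℕ)):ℤ) - n then (u.choose (k+1) : ℤ) else 0)
      + (if ((p:ℤ)-1) ∣ (((0:ℕ)):ℤ) - n then (((u+1).choose 0 : ℕ) : ℤ) else 0)
      = ∑ k ∈ Finset.range (u + 1), if ((p : ℤ) - 1) ∣ ((k : ℤ) - n) then (u.choose k : ℤ) else 0 := by
    rw [Finset.sum_range_succ]
    rw [Nat.choose_succ_self]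
    rw [Finset.sum_range_succ' (fun k => if ((p : ℤ) - 1) ∣ ((k : ℤ) - n) then (u.choose k : ℤ) else 0) u]
    simp
  rw [add_assoc, h2]
  ring

lemma altsum (m : ℕ) (f : ℕ → ℤ) :
    ∑ i ∈ range (m+2), (-1:ℤ)^i * ((m+1).choose i) * f (m+1-i)
      = ∑ i ∈ range (m+1), (-1:ℤ)^i * (m.choose i) * f (m+1-i)
        - ∑ i ∈ range (m+1), (-1:ℤ)^i * (m.choose i) * f (m-i) := by
  rw [Finset.sum_range_succ' _ (m+1)]
  have h1 : ∀ j ∈ Finset.range (m+1),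
      (-1:ℤ)^(j+1) * (((m+1).choose (j+1) : ℕ) : ℤ) * f (m+1-(j+1))
      = (-(-1:ℤ)^j * (m.choose j) * f (m-j))
        + ((-1:ℤ)^(j+1) * (m.choose (j+1)) * f (m-j)) := by
    intro j _
    have : m + 1 - (j+1) = m - j := by omega
    rw [this, Nat.choose_succ_succ]
    push_cast; ring
  rw [Finset.sum_congr rfl h1, Finset.sum_add_distrib]
  have h2 : (∑ j ∈ Finset.range (m+1), (-1:ℤ)^(j+1) * (m.choose (j+1)) * f (m-j))
      + ((-1:ℤ)^0 * (((m+1).choose 0 : ℕ) : ℤ) * f (m+1-0))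
      = ∑ i ∈ range (m+1), (-1:ℤ)^i * (m.choose i) * f (m+1-i) := by
    rw [Finset.sum_range_succ, Nat.choose_succ_self]
    rw [Finset.sum_range_succ' (fun i => (-1:ℤ)^i * (m.choose i) * f (m+1-i)) m]
    have : ∀ j ∈ Finset.range m, (-1:ℤ)^(j+1) * ((m.choose (j+1) : ℕ) : ℤ) * f (m+1-(j+1))
        = (-1:ℤ)^(j+1) * (m.choose (j+1)) * f (m-j) := by
      intro j _
      congr 1
      congr 1
      omega
    rw [Finset.sum_congr rfl this]
    simp
  have h3 : ∀ j ∈ Finset.range (m+1), (-(-1:ℤ)^j * (m.choose j) * f (m-j))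
      = -((-1:ℤ)^j * (m.choose j) * f (m-j)) := by intro j _; ring
  rw [Finset.sum_congr rfl h3, Finset.sum_neg_distrib]
  linarith [h2]

lemma keyM (p m : ℕ) : ∀ u : ℕ,
    Mfun p u (-(m:ℤ)) = ∑ i ∈ range (m+1), (-1:ℤ)^i * (m.choose i) * Mfun p (u + m - i) 0 := by
  induction m with
  | zero => intro u; simp
  | succ m ih =>
    intro u
    have hp := pascalM p u (-(m:ℤ))
    have hcast : (-(m:ℤ)) - 1 = -(((m+1:ℕ)):ℤ) := by push_cast; ring
    rw [hcast] at hp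
    have hmain : Mfun p u (-((m+1:ℕ):ℤ)) = Mfun p (u+1) (-(m:ℤ)) - Mfun p u (-(m:ℤ)) := by
      omega
    rw [hmain, ih (u+1), ih u]
    have := altsum m (fun k => Mfun p (u + k) 0)
    have e1 : ∀ i ∈ range (m+2), (-1:ℤ)^i * (((m+1).choose i : ℕ) : ℤ) * Mfun p (u + (m+1) - i) 0
        = (-1:ℤ)^i * ((m+1).choose i) * Mfun p (u + (m+1-i)) 0 := by
      intro i hi
      congr 2
      simp at hi
      omega
    have e2 : ∀ i ∈ range (m+1), (-1:ℤ)^i * ((m.choose i : ℕ) : ℤ) * Mfun p (u + 1 + m - i) 0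
        = (-1:ℤ)^i * (m.choose i) * Mfun p (u + (m+1-i)) 0 := by
      intro i hi
      congr 2
      simp at hi
      omega
    have e3 : ∀ i ∈ range (m+1), (-1:ℤ)^i * ((m.choose i : ℕ) : ℤ) * Mfun p (u + m - i) 0
        = (-1:ℤ)^i * (m.choose i) * Mfun p (u + (m-i)) 0 := by
      intro i hi
      congr 2
      simp at hi
      omega
    rw [Finset.sum_congr rfl e1, Finset.sum_congr rfl e2, Finset.sum_congr rfl e3]
    exact this.symm

/-- For `n ≤ 0`: `M_{u,n} = ∑_{i=0}^{-n} (-1)^i C(-n,i) M_{u-n-i,0}`. -/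
theorem stmt_2 (p : ℕ) (hp : p.Prime) (hodd : Odd p) (u : ℕ) (hu : 1 ≤ u)
    (n : ℤ) (hn : n ≤ 0) :
    Mfun p u n =
      ∑ i ∈ Finset.range ((-n).toNat + 1),
        (-1 : ℤ) ^ i * ((-n).toNat.choose i : ℤ) * Mfun p (u + (-n).toNat - i) 0 := by
  have hn' : n = -(((-n).toNat : ℕ) : ℤ) := by omega
  conv_lhs => rw [hn']
  exact keyM p (-n).toNat u
end

section
/- Let p be an odd prime, u ≥ 1 an integer, and n ≥ 0 an integer. Then M_{u,n} ≡ (1 + δ) · C(⟨u⟩, ⌊n⌋) (mod p), where ⟨u⟩ is the unique element of {1,…,p−1} congruent to u mod p−1, ⌊n⌋ is the unique element of {0,…,p−2} congruent to n mod p−1, and δ = 1 if both u ≡ 0 and n ≡ 0 (mod p−1) and δ = 0 otherwise. -/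

lemma zpow_congr_of_pow_eq_one {F : Type*} [Field F] {x : F} (hx : x ≠ 0) {c : ℕ}
    (h1 : x ^ c = 1) {a b : ℤ} (h : (c : ℤ) ∣ (a - b)) : x ^ a = x ^ b := by
  obtain ⟨e, he⟩ := h
  have ha : a = b + (c : ℤ) * e := by linarith
  rw [ha, zpow_add₀ hx, zpow_mul, zpow_natCast, h1, one_zpow, mul_one]

lemma sum_units_zpow (p : ℕ) [Fact p.Prime] (m : ℤ) :
    ∑ x : (ZMod p)ˣ, (x : ZMod p) ^ m = if ((p : ℤ) - 1) ∣ m then -1 else 0 := by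
  have hp2 : 2 ≤ p := (Fact.out : p.Prime).two_le
  have hcast : ((p : ℤ) - 1) = ((p - 1 : ℕ) : ℤ) := by omega
  set r := m % ((p : ℤ) - 1) with hr
  have hr0 : 0 ≤ r := Int.emod_nonneg _ (by omega)
  have hrlt : r < (p : ℤ) - 1 := Int.emod_lt_of_pos _ (by omega)
  have hdvd : ((p - 1 : ℕ) : ℤ) ∣ (m - r) := by
    rw [← hcast]
    exact ⟨m / ((p:ℤ)-1), by rw [hr]; have := Int.mul_ediv_add_emod m ((p:ℤ)-1); linarith⟩
  have step : ∀ x : (ZMod p)ˣ, (x : ZMod p) ^ m = (x : ZMod p) ^ r.toNat := by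
    intro x
    have h1 : (x : ZMod p) ^ (p - 1) = 1 := ZMod.pow_card_sub_one_eq_one x.ne_zero
    rw [← zpow_natCast _ r.toNat]
    exact zpow_congr_of_pow_eq_one x.ne_zero h1
      (by rwa [Int.toNat_of_nonneg hr0])
  simp_rw [step]
  classical
  have hsum := FiniteField.sum_pow_units (ZMod p) r.toNat
  rw [ZMod.card] at hsum
  rw [hsum]
  congr 1
  simp only [eq_iff_iff]
  have h1 : ((p - 1 : ℕ) : ℤ) ∣ r ↔ (p - 1) ∣ r.toNat := by
    conv_lhs => rw [← Int.toNat_of_nonneg hr0]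
    exact Int.natCast_dvd_natCast
  constructor
  · intro hd
    rw [hcast]
    have : m = (m - r) + r := by ring
    rw [this]
    exact dvd_add hdvd (h1.mpr hd)
  · intro hd
    rw [hcast] at hd
    apply h1.mp
    have := dvd_sub hd hdvd
    simpa using this

lemma expand_sum (p : ℕ) [Fact p.Prime] (v : ℕ) (m : ℤ) :
    ∑ x : (ZMod p)ˣ, (x : ZMod p) ^ (-m) * (1 + (x : ZMod p)) ^ v
      = ∑ k ∈ Finset.range (v + 1),
          (v.choose k : ZMod p) * (if ((p : ℤ) - 1) ∣ ((k : ℤ) - m) then -1 else 0) := by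
  have key : ∀ x : (ZMod p)ˣ, (x : ZMod p) ^ (-m) * (1 + (x : ZMod p)) ^ v
      = ∑ k ∈ Finset.range (v + 1), (v.choose k : ZMod p) * (x : ZMod p) ^ ((k : ℤ) - m) := by
    intro x
    rw [add_comm (1 : ZMod p), add_pow, Finset.mul_sum]
    refine Finset.sum_congr rfl fun k hk => ?_
    rw [one_pow, mul_one, ← zpow_natCast (x : ZMod p) k]
    rw [mul_comm ((x : ZMod p) ^ (k:ℤ)) _, ← mul_assoc, mul_comm ((x:ZMod p) ^ (-m)) _,
      mul_assoc, ← zpow_add₀ x.ne_zero, neg_add_eq_sub]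
  simp_rw [key]
  rw [Finset.sum_comm]
  refine Finset.sum_congr rfl fun k _ => ?_
  rw [← Finset.mul_sum, sum_units_zpow]

/-- For `n ≥ 0`: `M_{u,n} ≡ (1+δ)·C(⟨u⟩,⌊n⌋) (mod p)`, where `⟨u⟩ ∈ {1,…,p-1}` and
`⌊n⌋ ∈ {0,…,p-2}` are the representatives of `u` and `n` mod `p-1`, and `δ = 1`
iff both `u ≡ 0` and `n ≡ 0 (mod p-1)`. -/
theorem stmt_3 (p : ℕ) (hp : p.Prime) (hodd : Odd p) (u : ℕ) (hu : 1 ≤ u)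
    (n : ℤ) (hn : 0 ≤ n) (s t : ℕ)
    (hs1 : 1 ≤ s) (hs2 : s ≤ p - 1) (hsu : s ≡ u [MOD p - 1])
    (ht1 : t ≤ p - 2) (htn : (t : ℤ) ≡ n [ZMOD (p : ℤ) - 1]) :
    Mfun p u n ≡
      (1 + if (p - 1) ∣ u ∧ ((p : ℤ) - 1) ∣ n then 1 else 0) * (s.choose t : ℤ)
      [ZMOD (p : ℤ)] := by
  classical
  haveI := Fact.mk hp
  have hp3 : 3 ≤ p := by
    have h2 := hp.two_le
    have := Nat.odd_iff.mp hodd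
    omega
  have hcast : ((p : ℤ) - 1) = ((p - 1 : ℕ) : ℤ) := by omega
  -- characterizations of s and t
  have hsiff : (p - 1) ∣ u ↔ s = p - 1 := by
    have hd : (p - 1) ∣ u ↔ (p - 1) ∣ s := by
      rw [Nat.dvd_iff_mod_eq_zero, Nat.dvd_iff_mod_eq_zero, hsu]
    rw [hd]
    constructor
    · intro h; have := Nat.le_of_dvd (by omega) h; omega
    · intro h; rw [h]
  have htiff : ((p : ℤ) - 1) ∣ n ↔ t = 0 := by
    have ht' : (t : ℤ) % ((p : ℤ) - 1) = (t : ℤ) := Int.emod_eq_of_lt (by omega) (by omega)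
    rw [Int.dvd_iff_emod_eq_zero, ← htn, ht']
    omega
  -- reduce the sum over units
  have h1 : ∑ x : (ZMod p)ˣ, (x : ZMod p) ^ (-n) * (1 + (x : ZMod p)) ^ u
          = ∑ x : (ZMod p)ˣ, (x : ZMod p) ^ (-(t : ℤ)) * (1 + (x : ZMod p)) ^ s := by
    refine Finset.sum_congr rfl fun x _ => ?_
    congr 1
    · refine zpow_congr_of_pow_eq_one x.ne_zero
        (ZMod.pow_card_sub_one_eq_one x.ne_zero) ?_
      rw [← hcast]
      have h2 : ((p:ℤ) - 1) ∣ ((t : ℤ) - n) := dvd_sub_comm.mp htn.dvd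
      have h3 : -n - -(t : ℤ) = (t : ℤ) - n := by ring
      rw [h3]; exact h2
    · by_cases hx : (1 : ZMod p) + (x : ZMod p) = 0
      · rw [hx, zero_pow (by omega), zero_pow (by omega)]
      · rw [← zpow_natCast _ u, ← zpow_natCast _ s]
        exact zpow_congr_of_pow_eq_one hx (ZMod.pow_card_sub_one_eq_one hx) hsu.dvd
  -- convert product-form sums to indicator-form sums
  have conv : ∀ (v : ℕ) (m : ℤ),
      (∑ k ∈ Finset.range (v + 1),
        (v.choose k : ZMod p) * (if ((p : ℤ) - 1) ∣ ((k : ℤ) - m) then -1 else 0))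
      = -∑ k ∈ Finset.range (v + 1),
          (if ((p : ℤ) - 1) ∣ ((k : ℤ) - m) then (v.choose k : ZMod p) else 0) := by
    intro v m
    rw [← Finset.sum_neg_distrib]
    refine Finset.sum_congr rfl fun k _ => ?_
    split_ifs <;> ring
  -- Mfun cast equals the indicator sum for (s, t)
  have hM : (Mfun p u n : ZMod p)
      = ∑ j ∈ Finset.range (s + 1),
          (if ((p : ℤ) - 1) ∣ ((j : ℤ) - (t : ℤ)) then (s.choose j : ZMod p) else 0) := by
    have e1 := expand_sum p u n
    have e2 := expand_sum p s (t : ℤ)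
    rw [h1, e2, conv, conv] at e1
    have hMc : (Mfun p u n : ZMod p)
        = ∑ k ∈ Finset.range (u + 1),
            (if ((p : ℤ) - 1) ∣ ((k : ℤ) - n) then (u.choose k : ZMod p) else 0) := by
      simp [Mfun, apply_ite (Int.cast : ℤ → ZMod p)]
    rw [hMc]
    exact neg_injective e1.symm
  -- final evaluation
  rw [← ZMod.intCast_eq_intCast_iff]
  push_cast
  rw [hM]
  by_cases hδ : (p - 1) ∣ u ∧ ((p : ℤ) - 1) ∣ n
  · obtain ⟨hδ1, hδ2⟩ := hδ
    have hs : s = p - 1 := hsiff.mp hδ1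
    have ht : t = 0 := htiff.mp hδ2
    subst ht
    rw [if_pos ⟨hδ1, hδ2⟩]
    have split : ∀ j ∈ Finset.range (s + 1),
        (if ((p : ℤ) - 1) ∣ ((j : ℤ) - (0 : ℕ)) then (s.choose j : ZMod p) else 0)
        = (if j = 0 then (s.choose j : ZMod p) else 0)
          + (if j = s then (s.choose j : ZMod p) else 0) := by
      intro j hj
      simp only [Finset.mem_range] at hj
      have hcond : ((p : ℤ) - 1) ∣ ((j : ℤ) - (0 : ℕ)) ↔ (j = 0 ∨ j = s) := by
        rw [hcast]
        push_cast
        rw [sub_zero, Int.natCast_dvd_natCast]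
        constructor
        · intro h
          rcases Nat.eq_zero_or_pos j with h0 | h0
          · exact Or.inl h0
          · have := Nat.le_of_dvd h0 h; omega
        · rintro (rfl | rfl)
          · exact dvd_zero _
          · rw [hs]
      simp only [hcond]
      by_cases h0 : j = 0
      · subst h0
        rw [if_pos (Or.inl rfl), if_pos rfl, if_neg (by omega), add_zero]
      · by_cases hps : j = s
        · subst hps
          rw [if_pos (Or.inr rfl), if_neg h0, if_pos rfl, zero_add]
        · rw [if_neg (by tauto), if_neg h0, if_neg hps, add_zero]
    rw [Finset.sum_congr rfl split, Finset.sum_add_distrib,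
      Finset.sum_ite_eq' _ 0 (fun j => (s.choose j : ZMod p)),
      Finset.sum_ite_eq' _ s (fun j => (s.choose j : ZMod p)),
      if_pos (by simp), if_pos (by simp)]
    rw [hs]
    simp [Nat.choose_self, Nat.choose_zero_right]
  · rw [if_neg hδ]
    have hcond : ∀ j ∈ Finset.range (s + 1),
        (if ((p : ℤ) - 1) ∣ ((j : ℤ) - (t : ℤ)) then (s.choose j : ZMod p) else 0)
        = (if j = t then (s.choose j : ZMod p) else 0) := by
      intro j hj
      simp only [Finset.mem_range] at hj
      congr 1
      simp only [eq_iff_iff]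
      constructor
      · rintro ⟨c, hc⟩
        have hP : (2 : ℤ) ≤ (p : ℤ) - 1 := by omega
        have hub : ((p : ℤ) - 1) * c ≤ (p : ℤ) - 1 := by
          rw [← hc]; omega
        have hlb : -((p : ℤ) - 1) < ((p : ℤ) - 1) * c := by
          rw [← hc]; omega
        have hc0 : 0 ≤ c := by nlinarith
        have hc1 : c ≤ 1 := by nlinarith
        interval_cases c
        · omega
        · exfalso
          have hj2 : j = p - 1 ∧ t = 0 ∧ s = p - 1 := by omega
          exact hδ ⟨hsiff.mpr hj2.2.2, htiff.mpr hj2.2.1⟩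
      · rintro rfl; exact ⟨0, by ring⟩
    rw [Finset.sum_congr rfl hcond,
      Finset.sum_ite_eq' _ t (fun j => (s.choose j : ZMod p))]
    by_cases hts : t ≤ s
    · rw [if_pos (by simp; omega)]; ring
    · rw [if_neg (by simp; omega), Nat.choose_eq_zero_of_lt (by omega)]
      simp
end

section
/- Let b, l, n, w, u ≥ 0 be integers with u ≥ (b+l)·n and l ≥ w. Then ∑_{j=b}^{b+l} (−1)^{j−b} · C(l, j−b) · C(u − n·j, w) = δ_{w=l} · n^l, where δ_{w=l} equals 1 if w = l and 0 otherwise. -/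
open Finset

/-- Telescoping: `C(m, w+1) = C(m-n, w+1) + ∑_{t<n} C(m-1-t, w)` for `n ≤ m`. -/
lemma tele_aux (m w : ℕ) : ∀ n : ℕ, n ≤ m →
    m.choose (w+1) = (m - n).choose (w+1) + ∑ t ∈ range n, (m - 1 - t).choose w := by
  intro n
  induction n with
  | zero => simp
  | succ n ih =>
    intro h
    have hn : n ≤ m := by omega
    rw [sum_range_succ, ih hn]
    have e1 : m - n = (m - (n+1)) + 1 := by omega
    have e2 : m - 1 - n = m - (n+1) := by omega
    rw [e1, e2, Nat.choose_succ_succ]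
    ring

/-- Binomial transform step. -/
lemma step_aux (l : ℕ) (f : ℕ → ℤ) :
    ∑ i ∈ range (l+1+1), (-1:ℤ)^i * ((l+1).choose i : ℤ) * f i
      = ∑ i ∈ range (l+1), (-1:ℤ)^i * (l.choose i : ℤ) * (f i - f (i+1)) := by
  have h1 : ∀ i, (-1:ℤ)^(i+1) * ((l+1).choose (i+1) : ℤ) * f (i+1)
      = -((-1)^i * (l.choose i : ℤ) * f (i+1)) - (-1)^i * (l.choose (i+1) : ℤ) * f (i+1) := by
    intro i
    rw [Nat.choose_succ_succ]
    push_cast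
    ring
  have hC : ∑ i ∈ range (l+1), (-1:ℤ)^i * (l.choose (i+1) : ℤ) * f (i+1)
      = f 0 - ∑ i ∈ range (l+1), (-1:ℤ)^i * (l.choose i : ℤ) * f i := by
    rw [sum_range_succ, Nat.choose_succ_self]
    rw [Finset.sum_range_succ' (fun i => (-1:ℤ)^i * (l.choose i : ℤ) * f i) l]
    simp only [Nat.cast_zero, mul_zero, zero_mul, add_zero, pow_zero, Nat.choose_zero_right,
      Nat.cast_one, mul_one, one_mul]
    have : ∀ i, (-1:ℤ)^(i+1) * (l.choose (i+1) : ℤ) * f (i+1)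
        = -((-1:ℤ)^i * (l.choose (i+1) : ℤ) * f (i+1)) := by intro i; ring
    simp only [this, Finset.sum_neg_distrib]
    ring
  rw [Finset.sum_range_succ' (fun i => (-1:ℤ)^i * ((l+1).choose i : ℤ) * f i) (l+1)]
  simp only [h1]
  rw [Finset.sum_sub_distrib, Finset.sum_neg_distrib, hC]
  simp only [pow_zero, Nat.choose_zero_right, Nat.cast_one, mul_one, one_mul]
  rw [show ∀ A B : ℤ, ∑ i ∈ range (l+1), (-1:ℤ)^i * (l.choose i : ℤ) * (f i - f (i+1))
      = ∑ i ∈ range (l+1), ((-1:ℤ)^i * (l.choose i : ℤ) * f i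
          - (-1:ℤ)^i * (l.choose i : ℤ) * f (i+1)) from fun _ _ => by
        apply Finset.sum_congr rfl; intro i _; ring]
  · rw [Finset.sum_sub_distrib]
    ring
  · exact 0
  · exact 0

/-- For `u ≥ (b+l)n` and `l ≥ w`:
`∑_{j=b}^{b+l} (-1)^{j-b} C(l, j-b) C(u-nj, w) = δ_{w=l} n^l`
(the summation index is written as `j = b + i` with `0 ≤ i ≤ l`). -/
theorem stmt_4 (b l n w u : ℕ) (hu : (b + l) * n ≤ u) (hlw : w ≤ l) :
    ∑ i ∈ Finset.range (l + 1),
        (-1 : ℤ) ^ i * (l.choose i : ℤ) * ((u - n * (b + i)).choose w : ℤ) =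
      if w = l then (n : ℤ) ^ l else 0 := by
  induction l generalizing b w u with
  | zero =>
    interval_cases w
    simp
  | succ l ih =>
    rw [step_aux l (fun i => ((u - n * (b + i)).choose w : ℤ))]
    rcases Nat.eq_zero_or_pos w with hw | hw
    · subst hw
      simp only [Nat.choose_zero_right, Nat.cast_one, sub_self, mul_zero]
      rw [Finset.sum_const_zero]
      have : (0 : ℕ) ≠ l + 1 := by omega
      simp [this]
    · obtain ⟨w', rfl⟩ : ∃ w', w = w' + 1 := ⟨w - 1, by omega⟩
      have key : ∀ i ∈ range (l+1),
          (-1:ℤ)^i * (l.choose i : ℤ) *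
            (((u - n * (b + i)).choose (w'+1) : ℤ) - ((u - n * (b + (i+1))).choose (w'+1) : ℤ))
          = ∑ t ∈ range n, (-1:ℤ)^i * (l.choose i : ℤ) *
              (((u - 1 - t) - n * (b + i)).choose w' : ℤ) := by
        intro i hi
        rw [Finset.mem_range] at hi
        have hni : n * (b + i) + n ≤ u := by
          calc n * (b + i) + n = n * (b + i + 1) := by ring
          _ ≤ n * (b + (l + 1)) := by
              apply Nat.mul_le_mul_left; omega
          _ = (b + (l+1)) * n := by ring
          _ ≤ u := hu
        have hle : n ≤ u - n * (b + i) := by omega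
        have e1 : u - n * (b + (i+1)) = (u - n * (b + i)) - n := by
          have : n * (b + (i+1)) = n * (b + i) + n := by ring
          omega
        have e2 : ∀ t, u - n * (b + i) - 1 - t = (u - 1 - t) - n * (b + i) := by
          intro t
          omega
        rw [e1, tele_aux (u - n * (b + i)) w' n hle]
        push_cast
        rw [add_sub_cancel_left, Finset.mul_sum]
        simp only [e2]
      rw [Finset.sum_congr rfl key, Finset.sum_comm]
      have hinner : ∀ t ∈ range n,
          ∑ i ∈ range (l+1), (-1:ℤ)^i * (l.choose i : ℤ) *
              (((u - 1 - t) - n * (b + i)).choose w' : ℤ)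
          = if w' = l then (n:ℤ)^l else 0 := by
        intro t ht
        rw [Finset.mem_range] at ht
        apply ih
        · have h1 : (b + (l+1)) * n ≤ u := hu
          have : (b + l) * n + n = (b + (l+1)) * n := by ring
          omega
        · omega
      rw [Finset.sum_congr rfl hinner, Finset.sum_const, Finset.card_range]
      by_cases h : w' = l
      · subst h
        simp [pow_succ]
        ring
      · have : ¬ (w' + 1 = l + 1) := by omega
        simp [h, this]
end

section
/- Let t ∈ ℤ and let l, w ≥ 0 be integers. Then for every x ∈ ℚ: C(x, t+l) · C(t, w) = ∑_{v=0}^{w} (−1)^{w−v} · C(l+w−v−1, w−v) · C(x, v) · C(x−v, t+l−v). -/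
/-- The descending factorial `z(z-1)⋯(z-n+1)` of a rational number. -/
def descFac (z : ℚ) (n : ℕ) : ℚ := ∏ i ∈ Finset.range n, (z - i)

/-- The generalized binomial coefficient `C(z, n)` for `z ∈ ℚ`, `n ∈ ℤ`:
`z(z-1)⋯(z-n+1)/n!` for `n ≥ 0`, and `0` for `n < 0`. -/
def qchoose (z : ℚ) (n : ℤ) : ℚ :=
  if 0 ≤ n then descFac z n.toNat / (Nat.factorial n.toNat : ℚ) else 0

lemma descFac_eq_smeval (z : ℚ) (n : ℕ) :
    descFac z n = (descPochhammer ℤ n).smeval z := by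
  induction n with
  | zero => simp [descFac, Polynomial.smeval_one]
  | succ n ih =>
      rw [descPochhammer_succ_right, Polynomial.smeval_mul, ← ih, descFac,
        Finset.prod_range_succ, descFac]
      congr 1
      simp [Polynomial.smeval_sub, Polynomial.smeval_X, Polynomial.smeval_natCast]

lemma qchoose_natCast (z : ℚ) (k : ℕ) : qchoose z (k : ℤ) = Ring.choose z k := by
  have h := Ring.descPochhammer_eq_factorial_smul_choose z k
  rw [qchoose, if_pos (by positivity), Int.toNat_natCast, descFac_eq_smeval, h, nsmul_eq_mul]
  field_simp

lemma qchoose_nat (m k : ℕ) : qchoose (m : ℚ) (k : ℤ) = m.choose k := by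
  rw [qchoose_natCast, Ring.choose_natCast]

/-- subset-of-subset identity -/
lemma qchoose_mul_qchoose_sub (x : ℚ) (m v : ℕ) :
    qchoose x (v : ℤ) * qchoose (x - v) ((m : ℤ) - v) = (m.choose v : ℚ) * qchoose x m := by
  rcases le_or_gt v m with hvm | hvm
  · have h1 : (m : ℤ) - v = ((m - v : ℕ) : ℤ) := by omega
    rw [h1, qchoose_natCast, qchoose_natCast, qchoose_natCast,
      ← Ring.choose_smul_choose x hvm, nsmul_eq_mul]
  · have h1 : ¬ (0 : ℤ) ≤ (m : ℤ) - v := by omega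
    rw [show qchoose (x - v) ((m : ℤ) - v) = 0 from by rw [qchoose, if_neg h1],
      Nat.choose_eq_zero_of_lt hvm]
    simp

lemma qchoose_neg (l k : ℕ) :
    qchoose (-(l : ℚ)) (k : ℤ) = (-1 : ℚ) ^ k * qchoose ((l : ℚ) + k - 1) (k : ℤ) := by
  have hd : descFac (-(l : ℚ)) k = (-1 : ℚ) ^ k * descFac ((l : ℚ) + k - 1) k := by
    rw [descFac, descFac, ← Finset.prod_range_reflect (fun i => ((l : ℚ) + ↑k - 1 - ↑i)),
      show ((-1 : ℚ)) ^ k = ∏ _i ∈ Finset.range k, (-1 : ℚ) by simp, ← Finset.prod_mul_distrib]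
    refine Finset.prod_congr rfl fun i hi => ?_
    have hik : i < k := Finset.mem_range.mp hi
    push_cast [Nat.cast_sub (show i ≤ k - 1 by omega), Nat.cast_sub (show 1 ≤ k by omega)]
    ring
  simp [qchoose, hd, mul_div_assoc]

/-- Chu–Vandermonde for qchoose. -/
lemma qchoose_add (a b : ℚ) (w : ℕ) :
    qchoose (a + b) (w : ℤ) =
      ∑ v ∈ Finset.range (w + 1), qchoose a (v : ℤ) * qchoose b ((w - v : ℕ) : ℤ) := by
  rw [qchoose_natCast, Ring.add_choose_eq w (Commute.all a b),
    Finset.Nat.sum_antidiagonal_eq_sum_range_succ (fun i j => Ring.choose a i * Ring.choose b j) w]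
  exact Finset.sum_congr rfl fun v hv => by rw [qchoose_natCast, qchoose_natCast]

/-- `C(x, t+l)·C(t, w) = ∑_{v=0}^{w} (-1)^{w-v} C(l+w-v-1, w-v) C(x, v) C(x-v, t+l-v)`. -/
theorem stmt_5 (t : ℤ) (l w : ℕ) (x : ℚ) :
    qchoose x (t + l) * qchoose (t : ℚ) (w : ℤ) =
      ∑ v ∈ Finset.range (w + 1),
        (-1 : ℚ) ^ (w - v) * qchoose ((l : ℚ) + w - v - 1) ((w : ℤ) - v) *
          qchoose x (v : ℤ) * qchoose (x - v) (t + l - v) := by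
  rcases lt_or_ge (t + (l : ℤ)) 0 with ht | ht
  · rw [qchoose, if_neg (by omega), zero_mul]
    symm
    refine Finset.sum_eq_zero fun v hv => ?_
    rw [show qchoose (x - v) (t + l - v) = 0 by rw [qchoose, if_neg (by omega)], mul_zero]
  · set m : ℕ := (t + l).toNat with hmdef
    have hm : (m : ℤ) = t + l := Int.toNat_of_nonneg ht
    have htq : (t : ℚ) = (m : ℚ) + (-(l : ℚ)) := by
      have : t = (m : ℤ) - l := by omega
      rw [this]; push_cast; ring
    rw [← hm, htq, qchoose_add]
    rw [Finset.mul_sum]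
    refine Finset.sum_congr rfl fun v hv => ?_
    have hvw : v ≤ w := by
      have := Finset.mem_range.mp hv; omega
    have h1 : (w : ℤ) - v = ((w - v : ℕ) : ℤ) := by omega
    have h2 : (l : ℚ) + w - v - 1 = (l : ℚ) + ((w - v : ℕ) : ℚ) - 1 := by
      push_cast [Nat.cast_sub hvw]; ring
    rw [h1, h2, qchoose_nat, qchoose_neg]
    linear_combination (-((-1 : ℚ) ^ (w - v) * qchoose ((l : ℚ) + ((w - v : ℕ) : ℚ) - 1)
      ((w - v : ℕ) : ℤ))) * (qchoose_mul_qchoose_sub x m v)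
end

section
/- Let y ∈ ℤ and let u, v ≥ 0 be integers. Let b_w(X) = X(X−1)⋯(X−w+1)/w! ∈ ℚ[X] and let b_w′ denote its formal derivative. Then ∑_{w=0}^{v} (−1)^w · b_w′(y) · C(y+u−w, v−w) = − ∑_{w=1}^{v} (1/w) · C(u−w, v−w). -/
/-- The binomial coefficient polynomial `b_w(X) = X(X-1)⋯(X-w+1)/w! ∈ ℚ[X]`. -/
noncomputable def bpoly (w : ℕ) : Polynomial ℚ :=
  ((Nat.factorial w : ℚ))⁻¹ • ∏ i ∈ Finset.range w, (Polynomial.X - Polynomial.C (i : ℚ))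

open Polynomial Finset

lemma descFac_succ (z : ℚ) (n : ℕ) : descFac z (n+1) = descFac z n * (z - n) :=
  Finset.prod_range_succ _ _

lemma descFac_succ' (z : ℚ) (n : ℕ) : descFac (z+1) (n+1) = (z+1) * descFac z n := by
  unfold descFac
  rw [Finset.prod_range_succ']
  simp only [Nat.cast_zero, sub_zero]
  rw [mul_comm]
  congr 1
  apply Finset.prod_congr rfl
  intro i _
  push_cast
  ring

lemma qchoose_pascal (z : ℚ) (n : ℤ) :
    qchoose (z+1) n = qchoose z n + qchoose z (n-1) := by
  rcases lt_or_ge n 0 with h | h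
  · have h' : n - 1 < 0 := by omega
    simp [qchoose, not_le.mpr h, not_le.mpr h']
    exact fun h'' => absurd h'' (by omega)
  · obtain ⟨m, rfl⟩ := Int.eq_ofNat_of_zero_le h
    cases m with
    | zero => simp [qchoose, descFac]
    | succ m =>
      have h1 : (0:ℤ) ≤ ((m+1 : ℕ) : ℤ) := by positivity
      have h2 : (0:ℤ) ≤ ((m+1 : ℕ) : ℤ) - 1 := by omega
      have h3 : (((m+1:ℕ):ℤ)).toNat = m + 1 := by omega
      have h4 : ((((m+1:ℕ)):ℤ) - 1).toNat = m := by omega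
      rw [qchoose, qchoose, qchoose, if_pos h1, if_pos h1, if_pos h2, h3, h4]
      rw [descFac_succ', descFac_succ]
      have hf : (Nat.factorial (m+1) : ℚ) = ((m:ℚ)+1) * Nat.factorial m := by
        rw [Nat.factorial_succ]; push_cast; ring
      have hm : (Nat.factorial m : ℚ) ≠ 0 := by positivity
      have hm1 : ((m:ℚ)+1) ≠ 0 := by positivity
      rw [hf]
      field_simp
      ring

lemma bpoly_comp (w : ℕ) :
    (bpoly (w+1)).comp (X + C 1) = bpoly (w+1) + bpoly w := by
  unfold bpoly
  rw [Polynomial.smul_comp, Polynomial.prod_comp]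
  simp only [sub_comp, X_comp, C_comp]
  have hP : (∏ i ∈ range (w+1), (X + C 1 - C (i:ℚ)))
      = (X + C 1) * ∏ i ∈ range w, (X - C (i:ℚ)) := by
    rw [Finset.prod_range_succ']
    simp only [Nat.cast_zero, C_0, sub_zero]
    rw [mul_comm]
    congr 1
    apply Finset.prod_congr rfl
    intro i _
    have : ((i:ℚ)+1) = ((i+1 : ℕ) : ℚ) := by push_cast; ring
    rw [← this, C_add, C_1]
    ring
  rw [hP, Finset.prod_range_succ]
  set P : Polynomial ℚ := ∏ i ∈ range w, (X - C (i:ℚ)) with hPdef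
  have hf : ((Nat.factorial (w+1) : ℚ))⁻¹ = ((w:ℚ)+1)⁻¹ * ((Nat.factorial w : ℚ))⁻¹ := by
    rw [Nat.factorial_succ]
    push_cast
    rw [mul_inv]
  rw [hf, Polynomial.smul_eq_C_mul, Polynomial.smul_eq_C_mul, Polynomial.smul_eq_C_mul]
  have hw1 : ((w:ℚ)+1) ≠ 0 := by positivity
  have hc : (C ((w:ℚ)+1) : Polynomial ℚ) * C (((w:ℚ)+1)⁻¹ * (Nat.factorial w : ℚ)⁻¹)
      = C ((Nat.factorial w : ℚ))⁻¹ := by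
    rw [← C_mul]
    congr 1
    field_simp
  have hcw : (C ((w:ℚ)+1) : Polynomial ℚ) = C (w:ℚ) + C 1 := by rw [C_add]
  rw [← hc, hcw]
  ring

lemma D_pascal (w : ℕ) (x : ℚ) :
    (derivative (bpoly (w+1))).eval (x+1)
      = (derivative (bpoly (w+1))).eval x + (derivative (bpoly w)).eval x := by
  have h := congrArg derivative (bpoly_comp w)
  rw [derivative_comp] at h
  simp only [derivative_add, derivative_X, derivative_C, add_zero, one_mul] at h
  have h2 := congrArg (eval x) h
  rw [eval_comp] at h2
  simp only [eval_add, eval_X, eval_C] at h2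
  rw [h2]

lemma D_zero : (derivative (bpoly 0)) = 0 := by
  simp [bpoly]

lemma prod_neg_succ (w : ℕ) :
    (∏ i ∈ range w, ((0:ℚ) - ((i:ℚ)+1))) = (-1)^w * Nat.factorial w := by
  induction w with
  | zero => simp
  | succ w ih =>
    rw [Finset.prod_range_succ, ih, Nat.factorial_succ]
    push_cast
    ring

lemma D_at_zero (w : ℕ) :
    (derivative (bpoly (w+1))).eval 0 = (-1)^w / ((w:ℚ)+1) := by
  have hX : (∏ i ∈ range (w+1), (X - C (i:ℚ)))
      = X * ∏ i ∈ range w, (X - C ((i:ℚ)+1)) := by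
    rw [Finset.prod_range_succ']
    simp only [Nat.cast_zero, C_0, sub_zero]
    rw [mul_comm]
    congr 1
    apply Finset.prod_congr rfl
    intro i _
    have : ((i:ℚ)+1) = ((i+1 : ℕ) : ℚ) := by push_cast; ring
    rw [this]
  rw [bpoly, hX]
  rw [derivative_smul, derivative_mul, derivative_X]
  simp only [eval_smul, eval_add, eval_mul, eval_X, one_mul, zero_mul, zero_add, smul_eq_mul]
  have he : eval 0 (∏ i ∈ range w, (X - C ((i:ℚ)+1)))
      = (∏ i ∈ range w, ((0:ℚ) - ((i:ℚ)+1))) := by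
    rw [eval_prod]
    apply Finset.prod_congr rfl
    intro i _
    simp
  rw [he, prod_neg_succ]
  have hf : (Nat.factorial (w+1) : ℚ) = ((w:ℚ)+1) * Nat.factorial w := by
    rw [Nat.factorial_succ]; push_cast; ring
  have hm : (Nat.factorial w : ℚ) ≠ 0 := by positivity
  have hm1 : ((w:ℚ)+1) ≠ 0 := by positivity
  rw [hf]
  field_simp
  ring

noncomputable def Sfun (u v : ℕ) (x : ℚ) : ℚ :=
  ∑ w ∈ Finset.range (v + 1),
    (-1 : ℚ) ^ w * (Polynomial.derivative (bpoly w)).eval x *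
      qchoose (x + u - w) ((v : ℤ) - w)

lemma Sfun_step (u v : ℕ) (x : ℚ) : Sfun u v (x+1) = Sfun u v x := by
  unfold Sfun
  rw [Finset.sum_range_succ', Finset.sum_range_succ']
  simp only [D_zero, eval_zero, mul_zero, zero_mul, add_zero, pow_zero, one_mul]
  rw [← sub_eq_zero, ← Finset.sum_sub_distrib]
  have key : ∀ w ∈ range v,
      (-1:ℚ)^(w+1) * (derivative (bpoly (w+1))).eval (x+1) *
          qchoose (x + 1 + u - (w+1:ℕ)) ((v:ℤ) - (w+1:ℕ))
        - (-1:ℚ)^(w+1) * (derivative (bpoly (w+1))).eval x *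
          qchoose (x + u - (w+1:ℕ)) ((v:ℤ) - (w+1:ℕ))
      = ((-1:ℚ)^(w+1) * (derivative (bpoly (w+1))).eval x *
            qchoose (x + u - (w+1:ℕ)) ((v:ℤ) - 1 - (w+1:ℕ)))
        - ((-1:ℚ)^w * (derivative (bpoly w)).eval x *
            qchoose (x + u - (w:ℕ)) ((v:ℤ) - 1 - (w:ℕ))) := by
    intro w _
    have e1 : x + 1 + (u:ℚ) - (w+1:ℕ) = (x + u - (w+1:ℕ)) + 1 := by push_cast; ring
    rw [e1, qchoose_pascal, D_pascal]
    have e2 : x + (u:ℚ) - (w:ℕ) = (x + u - (w+1:ℕ)) + 1 := by push_cast; ring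
    rw [e2, qchoose_pascal]
    have e3 : (v:ℤ) - 1 - (w:ℕ) = (v:ℤ) - (w+1:ℕ) := by push_cast; ring
    have e4 : (v:ℤ) - 1 - (w+1:ℕ) = (v:ℤ) - (w+1:ℕ) - 1 := by push_cast; ring
    rw [e3, e4]
    push_cast
    ring
  rw [Finset.sum_congr rfl key, Finset.sum_range_sub
    (f := fun w => (-1:ℚ)^w * (derivative (bpoly w)).eval x *
      qchoose (x + u - (w:ℕ)) ((v:ℤ) - 1 - (w:ℕ)))]
  have hv : ((v:ℤ) - 1 - (v:ℕ)) = -1 := by omega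
  rw [hv]
  simp [qchoose, D_zero]

lemma Sfun_base (u v : ℕ) :
    Sfun u v 0 = -∑ w ∈ Finset.Icc 1 v, (1 / (w : ℚ)) * qchoose ((u : ℚ) - w) ((v : ℤ) - w) := by
  unfold Sfun
  rw [Finset.sum_range_succ']
  simp only [D_zero, eval_zero, mul_zero, zero_mul, add_zero]
  rw [← Finset.Ico_add_one_right_eq_Icc, Finset.sum_Ico_eq_sum_range, ← Finset.sum_neg_distrib]
  simp only [Nat.succ_sub_one, Nat.add_sub_cancel]
  apply Finset.sum_congr rfl
  intro w _
  have eq1 : (0:ℚ) + (u:ℚ) - ((w+1:ℕ):ℚ) = (u:ℚ) - ((1+w:ℕ):ℚ) := by push_cast; ring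
  have eq2 : ((v:ℤ) - ((w+1:ℕ):ℤ)) = ((v:ℤ) - ((1+w:ℕ):ℤ)) := by push_cast; ring
  rw [eq1, eq2, D_at_zero]
  have eq3 : ((1+w:ℕ):ℚ) = (w:ℚ)+1 := by push_cast; ring
  set Q := qchoose ((u:ℚ) - ((1+w:ℕ):ℚ)) ((v:ℤ) - ((1+w:ℕ):ℤ)) with hQ
  rw [eq3]
  have h2 : (-1:ℚ)^w * (-1)^w = 1 := by rw [← mul_pow]; norm_num
  linear_combination (-Q/((w:ℚ)+1)) * h2

/-- `∑_{w=0}^{v} (-1)^w b_w'(y) C(y+u-w, v-w) = -∑_{w=1}^{v} (1/w) C(u-w, v-w)`,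
where `b_w'` is the formal derivative of the binomial coefficient polynomial. -/
theorem stmt_7 (y : ℤ) (u v : ℕ) :
    ∑ w ∈ Finset.range (v + 1),
        (-1 : ℚ) ^ w * (Polynomial.derivative (bpoly w)).eval (y : ℚ) *
          qchoose ((y : ℚ) + u - w) ((v : ℤ) - w) =
      -∑ w ∈ Finset.Icc 1 v, (1 / (w : ℚ)) * qchoose ((u : ℚ) - w) ((v : ℤ) - w) := by
  have main : ∀ z : ℤ, Sfun u v (z : ℚ)
      = -∑ w ∈ Finset.Icc 1 v, (1 / (w : ℚ)) * qchoose ((u : ℚ) - w) ((v : ℤ) - w) := by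
    intro z
    induction z using Int.induction_on with
    | zero => simpa using Sfun_base u v
    | succ i ih =>
      have e : ((i+1 : ℤ) : ℚ) = (i:ℚ) + 1 := by push_cast; ring
      rw [e, Sfun_step]
      exact ih
    | pred i ih =>
      have e : ((-i : ℤ) : ℚ) = ((-i-1 : ℤ) : ℚ) + 1 := by push_cast; ring
      rw [e, Sfun_step] at ih
      exact ih
  exact main y
end

section
/- Let i, u, v ≥ 0 be integers. Then ∑_{l=0}^{u+v} (−1)^l · C(l, i) · C(u, l−v) = (−1)^{u+v} · C(v, u+v−i). -/
/-- Integer-lower-index binomial coefficient of a natural number. -/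
def gc (v : ℕ) (m : ℤ) : ℚ := if 0 ≤ m then (v.choose m.toNat : ℚ) else 0

lemma descFac_cast (v k : ℕ) : descFac (v : ℚ) k = (v.descFactorial k : ℚ) := by
  induction k with
  | zero => simp [descFac]
  | succ k ih =>
    rw [descFac, Finset.prod_range_succ, ← descFac, ih, Nat.descFactorial_succ]
    rcases le_or_gt k v with h | h
    · push_cast [h]
      ring
    · rw [Nat.descFactorial_of_lt h]
      push_cast
      ring

lemma qchoose_natCast_s10 (v : ℕ) (m : ℤ) : qchoose (v : ℚ) m = gc v m := by
  unfold qchoose gc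
  by_cases h : 0 ≤ m
  · rw [if_pos h, if_pos h, descFac_cast, Nat.descFactorial_eq_factorial_mul_choose]
    have : ((m.toNat).factorial : ℚ) ≠ 0 := by positivity
    field_simp
    exact Nat.cast_mul _ _
  · rw [if_neg h, if_neg h]

lemma gc_neg (v : ℕ) {m : ℤ} (h : m < 0) : gc v m = 0 := by
  simp [gc, not_le.2 h]

lemma gc_natCast (v k : ℕ) : gc v (k : ℤ) = (v.choose k : ℚ) := by
  simp [gc]

lemma gc_pascal (v : ℕ) (m : ℤ) : gc (v + 1) m = gc v m + gc v (m - 1) := by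
  rcases lt_or_ge m 0 with h | h
  · rw [gc_neg _ h, gc_neg _ h, gc_neg _ (by omega)]
    ring
  · rcases eq_or_lt_of_le h with h0 | h0
    · rw [← h0]
      simp [gc]
    · obtain ⟨t, rfl⟩ : ∃ t : ℕ, m = (t : ℤ) + 1 := ⟨(m - 1).toNat, by omega⟩
      have h2 : ((t : ℤ) + 1 - 1) = ((t : ℕ) : ℤ) := by push_cast; ring
      have h1 : ((t : ℤ) + 1) = ((t + 1 : ℕ) : ℤ) := by push_cast; ring
      rw [h2, gc_natCast, h1, gc_natCast, gc_natCast, Nat.choose_succ_succ]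
      push_cast
      ring

lemma gc_symm (v : ℕ) (m : ℤ) : gc v m = gc v ((v : ℤ) - m) := by
  rcases lt_or_ge m 0 with h | h
  · rw [gc_neg _ h, gc]
    rw [if_pos (by omega)]
    rw [Nat.choose_eq_zero_of_lt (by omega)]
    simp
  · rcases le_or_gt m v with h2 | h2
    · obtain ⟨k, rfl⟩ : ∃ k : ℕ, m = (k : ℤ) := ⟨m.toNat, by omega⟩
      have hk : k ≤ v := by exact_mod_cast h2
      have : (v : ℤ) - k = ((v - k : ℕ) : ℤ) := by push_cast [hk]; ring
      rw [this, gc_natCast, gc_natCast, Nat.choose_symm hk]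
    · rw [gc_neg _ (by omega : (v : ℤ) - m < 0), gc, if_pos h,
        Nat.choose_eq_zero_of_lt (by omega)]
      simp

lemma key_step (u : ℕ) (g : ℕ → ℚ) :
    ∑ k ∈ Finset.range (u + 2), (-1 : ℚ) ^ k * ((u + 1).choose k : ℚ) * g k =
      (∑ k ∈ Finset.range (u + 1), (-1 : ℚ) ^ k * (u.choose k : ℚ) * g k) -
        ∑ k ∈ Finset.range (u + 1), (-1 : ℚ) ^ k * (u.choose k : ℚ) * g (k + 1) := by
  have hzero : ((u.choose (u + 1) : ℕ) : ℚ) = 0 := by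
    rw [Nat.choose_eq_zero_of_lt (by omega)]; simp
  have eT : ∑ k ∈ Finset.range (u + 1), (-1 : ℚ) ^ (k + 1) * (u.choose (k + 1) : ℚ) * g (k + 1)
      = (∑ k ∈ Finset.range (u + 1), (-1 : ℚ) ^ k * (u.choose k : ℚ) * g k) - g 0 := by
    have e2 := Finset.sum_range_succ' (fun k => (-1 : ℚ) ^ k * (u.choose k : ℚ) * g k) (u + 1)
    have e3 := Finset.sum_range_succ (fun k => (-1 : ℚ) ^ k * (u.choose k : ℚ) * g k) (u + 1)
    simp only [hzero, Nat.choose_zero_right, Nat.cast_one, pow_zero, mul_zero, zero_mul,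
      one_mul, mul_one, add_zero] at e2 e3
    rw [e3] at e2
    linarith [e2]
  rw [Finset.sum_range_succ' (fun k => (-1 : ℚ) ^ k * ((u + 1).choose k : ℚ) * g k) (u + 1)]
  have hc : ∀ k : ℕ, (((u + 1).choose (k + 1) : ℕ) : ℚ)
      = (u.choose k : ℚ) + (u.choose (k + 1) : ℚ) := by
    intro k
    rw [Nat.choose_succ_succ]
    push_cast; ring
  simp only [hc]
  have expand : ∑ k ∈ Finset.range (u + 1),
      (-1 : ℚ) ^ (k + 1) * ((u.choose k : ℚ) + (u.choose (k + 1) : ℚ)) * g (k + 1) =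
      (∑ k ∈ Finset.range (u + 1), -((-1 : ℚ) ^ k * (u.choose k : ℚ) * g (k + 1))) +
      ∑ k ∈ Finset.range (u + 1), (-1 : ℚ) ^ (k + 1) * (u.choose (k + 1) : ℚ) * g (k + 1) := by
    rw [← Finset.sum_add_distrib]
    apply Finset.sum_congr rfl
    intro k _
    ring
  rw [expand, eT, Finset.sum_neg_distrib]
  simp only [Nat.choose_zero_right, Nat.cast_one, pow_zero, one_mul, mul_one]
  ring

lemma aux_sum (u : ℕ) : ∀ v i : ℕ,
    ∑ k ∈ Finset.range (u + 1), (-1 : ℚ) ^ k * (u.choose k : ℚ) * ((v + k).choose i : ℚ) =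
      (-1 : ℚ) ^ u * gc v ((i : ℤ) - u) := by
  induction u with
  | zero => intro v i; simp [gc]
  | succ u ih =>
    intro v i
    have kk := key_step u (fun k => ((v + k).choose i : ℚ))
    rw [show u + 1 + 1 = u + 2 from rfl, kk, ih v i]
    have : ∑ k ∈ Finset.range (u + 1), (-1 : ℚ) ^ k * (u.choose k : ℚ) * ((v + (k + 1)).choose i : ℚ)
        = ∑ k ∈ Finset.range (u + 1), (-1 : ℚ) ^ k * (u.choose k : ℚ) * (((v + 1) + k).choose i : ℚ) := by
      apply Finset.sum_congr rfl; intro k _; rw [show v + (k + 1) = (v + 1) + k from by omega]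
    rw [this, ih (v + 1) i, gc_pascal]
    have : (i : ℤ) - (u + 1 : ℕ) = (i : ℤ) - u - 1 := by push_cast; ring
    rw [this]
    ring

/-- `∑_{l=0}^{u+v} (-1)^l C(l, i) C(u, l-v) = (-1)^{u+v} C(v, u+v-i)`. -/
theorem stmt_10 (i u v : ℕ) :
    ∑ l ∈ Finset.range (u + v + 1),
        (-1 : ℚ) ^ l * (l.choose i : ℚ) * qchoose (u : ℚ) ((l : ℤ) - v) =
      (-1 : ℚ) ^ (u + v) * qchoose (v : ℚ) ((u : ℤ) + v - i) := by
  simp only [qchoose_natCast_s10]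
  rw [show u + v + 1 = v + (u + 1) from by omega, Finset.sum_range_add]
  have h1 : ∑ l ∈ Finset.range v, (-1 : ℚ) ^ l * (l.choose i : ℚ) * gc u ((l : ℤ) - v) = 0 := by
    apply Finset.sum_eq_zero
    intro l hl
    rw [Finset.mem_range] at hl
    rw [gc_neg _ (by omega : (l : ℤ) - v < 0)]
    ring
  rw [h1, zero_add]
  have h2 : ∀ k ∈ Finset.range (u + 1),
      (-1 : ℚ) ^ (v + k) * ((v + k).choose i : ℚ) * gc u (((v + k : ℕ) : ℤ) - v)
        = (-1 : ℚ) ^ v * ((-1 : ℚ) ^ k * (u.choose k : ℚ) * ((v + k).choose i : ℚ)) := by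
    intro k _
    have : ((v + k : ℕ) : ℤ) - v = (k : ℤ) := by push_cast; ring
    rw [this, gc_natCast, pow_add]
    ring
  rw [Finset.sum_congr rfl h2, ← Finset.mul_sum, aux_sum u v i, gc_symm v ((i : ℤ) - u)]
  have : (v : ℤ) - ((i : ℤ) - u) = (u : ℤ) + v - i := by ring
  rw [this, pow_add]
  ring
end

section
/- For all integers w, m, u ≥ 0: ∑_{j=0}^{m} ∑_{l=1}^{j+1} (−1)^{m+l−1} · C(m, j) · C(j, l−1) · C(w+l−1, w) · C(l+u−1, j) = C(m+u, u) · C(w, m). -/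
open Finset

/-- Auxiliary finite-difference sum. -/
private def Faux (w m a : ℕ) : ℤ :=
  ∑ k ∈ range (m + 1), (-1 : ℤ) ^ (m + k) * (m.choose k : ℤ) * ((a + k).choose w : ℤ)

private lemma Faux_rec (w m a : ℕ) : Faux w (m + 1) a = Faux w m (a + 1) - Faux w m a := by
  have h1 : Faux w (m + 1) a
      = ∑ k ∈ range (m + 1),
          (-1 : ℤ) ^ (m + k) * ((m.choose k : ℤ) + (m.choose (k + 1) : ℤ))
            * ((a + 1 + k).choose w : ℤ)
        + (-1 : ℤ) ^ (m + 1) * (a.choose w : ℤ) := by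
    unfold Faux
    rw [Finset.sum_range_succ']
    congr 1
    · apply Finset.sum_congr rfl
      intro k _
      have e1 : m + 1 + (k + 1) = (m + k) + 2 := by omega
      have e2 : a + (k + 1) = a + 1 + k := by omega
      rw [e1, e2, Nat.choose_succ_succ]
      push_cast
      ring
    · simp
  have h2 : ∑ k ∈ range (m + 1),
        (-1 : ℤ) ^ (m + k) * (m.choose (k + 1) : ℤ) * ((a + 1 + k).choose w : ℤ)
      = - Faux w m a + (-1 : ℤ) ^ m * (a.choose w : ℤ) := by
    have hF : Faux w m a
        = ∑ k ∈ range m,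
            (-1 : ℤ) ^ (m + (k + 1)) * (m.choose (k + 1) : ℤ) * ((a + (k + 1)).choose w : ℤ)
          + (-1 : ℤ) ^ (m + 0) * (m.choose 0 : ℤ) * ((a + 0).choose w : ℤ) := by
      unfold Faux
      rw [Finset.sum_range_succ']
    have hneg : ∑ k ∈ range m,
          (-1 : ℤ) ^ (m + (k + 1)) * (m.choose (k + 1) : ℤ) * ((a + (k + 1)).choose w : ℤ)
        = - ∑ k ∈ range m,
            (-1 : ℤ) ^ (m + k) * (m.choose (k + 1) : ℤ) * ((a + 1 + k).choose w : ℤ) := by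
      rw [← Finset.sum_neg_distrib]
      apply Finset.sum_congr rfl
      intro k _
      have e1 : m + (k + 1) = (m + k) + 1 := by omega
      have e2 : a + (k + 1) = a + 1 + k := by omega
      rw [e1, e2, pow_succ]
      ring
    rw [hneg] at hF
    simp only [Nat.add_zero, Nat.choose_zero_right, Nat.cast_one, mul_one, one_mul,
      Nat.cast_zero] at hF
    rw [Finset.sum_range_succ, Nat.choose_succ_self]
    simp only [Nat.cast_zero, mul_zero, zero_mul, add_zero]
    linarith
  have h3 : ∑ k ∈ range (m + 1),
        (-1 : ℤ) ^ (m + k) * ((m.choose k : ℤ) + (m.choose (k + 1) : ℤ))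
          * ((a + 1 + k).choose w : ℤ)
      = Faux w m (a + 1)
        + ∑ k ∈ range (m + 1),
            (-1 : ℤ) ^ (m + k) * (m.choose (k + 1) : ℤ) * ((a + 1 + k).choose w : ℤ) := by
    unfold Faux
    rw [← Finset.sum_add_distrib]
    apply Finset.sum_congr rfl
    intro k _
    ring
  rw [h1, h3, h2]
  ring

private lemma Faux_le (w : ℕ) : ∀ m, m ≤ w → ∀ a, Faux w m a = (a.choose (w - m) : ℤ) := by
  intro m
  induction m with
  | zero =>
    intro _ a
    unfold Faux
    simp
  | succ n ih =>
    intro h a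
    rw [Faux_rec, ih (by omega) (a + 1), ih (by omega) a]
    have hs : w - n = (w - (n + 1)) + 1 := by omega
    rw [hs, Nat.choose_succ_succ]
    push_cast
    ring

private lemma Faux_gt (w : ℕ) : ∀ t a, Faux w (w + 1 + t) a = 0 := by
  intro t
  induction t with
  | zero =>
    intro a
    rw [show w + 1 + 0 = w + 1 from rfl, Faux_rec, Faux_le w w le_rfl (a + 1),
      Faux_le w w le_rfl a]
    simp
  | succ n ih =>
    intro a
    rw [show w + 1 + (n + 1) = (w + 1 + n) + 1 by omega, Faux_rec, ih, ih]
    ring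

private lemma Faux_diag (w m : ℕ) : Faux w m w = (w.choose m : ℤ) := by
  rcases le_or_gt m w with h | h
  · rw [Faux_le w m h w, Nat.choose_symm h]
  · obtain ⟨t, ht⟩ : ∃ t, m = w + 1 + t := ⟨m - (w + 1), by omega⟩
    rw [ht, Faux_gt]
    simp [Nat.choose_eq_zero_of_lt (show w < w + 1 + t by omega)]

private lemma vand_aux (s k u : ℕ) :
    ∑ i ∈ range (s + 1), (s.choose i : ℤ) * ((k + u).choose (k + i) : ℤ)
      = ((s + k + u).choose u : ℤ) := by
  -- extend both sides to range (s + u + 1)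
  have hext1 : ∑ i ∈ range (s + 1), (s.choose i : ℤ) * ((k + u).choose (k + i) : ℤ)
      = ∑ i ∈ range (s + u + 1), (s.choose i : ℤ) * ((k + u).choose (k + i) : ℤ) := by
    apply Finset.sum_subset
    · intro x hx; simp only [mem_range] at *; omega
    · intro x hx hx2
      simp only [mem_range] at hx hx2
      rw [Nat.choose_eq_zero_of_lt (by omega : s < x)]
      simp
  have hext2 : ∑ i ∈ range (u + 1), (s.choose i : ℤ) * ((k + u).choose (k + i) : ℤ)
      = ∑ i ∈ range (s + u + 1), (s.choose i : ℤ) * ((k + u).choose (k + i) : ℤ) := by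
    apply Finset.sum_subset
    · intro x hx; simp only [mem_range] at *; omega
    · intro x hx hx2
      simp only [mem_range] at hx hx2
      rw [Nat.choose_eq_zero_of_lt (by omega : k + u < k + x)]
      simp
  rw [hext1, ← hext2]
  -- now use Vandermonde
  have hV : (s + (k + u)).choose u
      = ∑ i ∈ range (u + 1), s.choose i * (k + u).choose (u - i) := by
    rw [Nat.add_choose_eq]
    rw [Finset.Nat.sum_antidiagonal_eq_sum_range_succ_mk]
  have : ((s + k + u).choose u : ℤ)
      = ∑ i ∈ range (u + 1), (s.choose i : ℤ) * ((k + u).choose (u - i) : ℤ) := by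
    rw [show s + k + u = s + (k + u) by omega, hV]
    push_cast
    rfl
  rw [this]
  apply Finset.sum_congr rfl
  intro i hi
  simp only [mem_range] at hi
  have hsym := Nat.choose_symm (show k + i ≤ k + u by omega)
  rw [show k + u - (k + i) = u - i by omega] at hsym
  rw [hsym]

private lemma innerSumAux (m u k : ℕ) (hk : k ≤ m) :
    ∑ j ∈ range (m + 1), (m.choose j : ℤ) * (j.choose k : ℤ) * ((k + u).choose j : ℤ)
      = (m.choose k : ℤ) * ((m + u).choose u : ℤ) := by
  rw [Finset.range_eq_Ico, ← Finset.sum_Ico_consecutive _ (Nat.zero_le k) (by omega : k ≤ m + 1)]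
  have h0 : ∑ j ∈ Finset.Ico 0 k,
      (m.choose j : ℤ) * (j.choose k : ℤ) * ((k + u).choose j : ℤ) = 0 := by
    apply Finset.sum_eq_zero
    intro j hj
    simp only [Finset.mem_Ico] at hj
    rw [Nat.choose_eq_zero_of_lt (by omega : j < k)]
    simp
  rw [h0, zero_add, Finset.sum_Ico_eq_sum_range]
  rw [show m + 1 - k = (m - k) + 1 by omega]
  have hcong : ∀ i ∈ range ((m - k) + 1),
      (m.choose (k + i) : ℤ) * ((k + i).choose k : ℤ) * ((k + u).choose (k + i) : ℤ)
        = (m.choose k : ℤ) * (((m - k).choose i : ℤ) * ((k + u).choose (k + i) : ℤ)) := by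
    intro i hi
    simp only [mem_range] at hi
    have hmul := Nat.choose_mul (n := m) (show k ≤ k + i by omega)
    rw [show k + i - k = i by omega] at hmul
    have : (m.choose (k + i) : ℤ) * ((k + i).choose k : ℤ)
        = (m.choose k : ℤ) * ((m - k).choose i : ℤ) := by
      exact_mod_cast congrArg (Nat.cast : ℕ → ℤ) hmul
    rw [this, mul_assoc]
  rw [Finset.sum_congr rfl hcong, ← Finset.mul_sum, vand_aux (m - k) k u,
    show m - k + k + u = m + u by omega]

/-- `∑_{j=0}^{m} ∑_{l=1}^{j+1} (-1)^{m+l-1} C(m,j) C(j,l-1) C(w+l-1,w) C(l+u-1,j)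
  = C(m+u,u) C(w,m)`. -/
theorem stmt_15 (w m u : ℕ) :
    ∑ j ∈ Finset.range (m + 1), ∑ l ∈ Finset.Icc 1 (j + 1),
        (-1 : ℤ) ^ (m + l - 1) * (m.choose j : ℤ) * (j.choose (l - 1) : ℤ) *
          ((w + l - 1).choose w : ℤ) * ((l + u - 1).choose j : ℤ) =
      ((m + u).choose u : ℤ) * (w.choose m : ℤ) := by
  -- Step 1: reindex l = k + 1
  have step1 : ∀ j, ∑ l ∈ Finset.Icc 1 (j + 1),
        (-1 : ℤ) ^ (m + l - 1) * (m.choose j : ℤ) * (j.choose (l - 1) : ℤ) *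
          ((w + l - 1).choose w : ℤ) * ((l + u - 1).choose j : ℤ)
      = ∑ k ∈ range (j + 1),
          (-1 : ℤ) ^ (m + k) * (m.choose j : ℤ) * (j.choose k : ℤ) *
            ((w + k).choose w : ℤ) * ((k + u).choose j : ℤ) := by
    intro j
    rw [← Finset.Ico_add_one_right_eq_Icc, Finset.sum_Ico_eq_sum_range]
    rw [show j + 1 + 1 - 1 = j + 1 by omega]
    apply Finset.sum_congr rfl
    intro k _
    rw [show m + (1 + k) - 1 = m + k by omega, show 1 + k - 1 = k by omega,
      show w + (1 + k) - 1 = w + k by omega, show 1 + k + u - 1 = k + u by omega]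
  simp only [step1]
  -- Step 2: pad inner sum to range (m + 1)
  have step2 : ∀ j ∈ range (m + 1), ∑ k ∈ range (j + 1),
        (-1 : ℤ) ^ (m + k) * (m.choose j : ℤ) * (j.choose k : ℤ) *
          ((w + k).choose w : ℤ) * ((k + u).choose j : ℤ)
      = ∑ k ∈ range (m + 1),
          (-1 : ℤ) ^ (m + k) * (m.choose j : ℤ) * (j.choose k : ℤ) *
            ((w + k).choose w : ℤ) * ((k + u).choose j : ℤ) := by
    intro j hj
    simp only [mem_range] at hj
    apply Finset.sum_subset
    · intro x hx; simp only [mem_range] at *; omega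
    · intro x hx hx2
      simp only [mem_range] at hx hx2
      rw [Nat.choose_eq_zero_of_lt (by omega : j < x)]
      simp
  rw [Finset.sum_congr rfl step2]
  -- Step 3: swap sums
  rw [Finset.sum_comm]
  -- Step 4: evaluate the inner sum over j
  have step4 : ∀ k ∈ range (m + 1), ∑ j ∈ range (m + 1),
        (-1 : ℤ) ^ (m + k) * (m.choose j : ℤ) * (j.choose k : ℤ) *
          ((w + k).choose w : ℤ) * ((k + u).choose j : ℤ)
      = ((m + u).choose u : ℤ) *
          ((-1 : ℤ) ^ (m + k) * (m.choose k : ℤ) * ((w + k).choose w : ℤ)) := by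
    intro k hk
    simp only [mem_range] at hk
    have : ∑ j ∈ range (m + 1),
        (-1 : ℤ) ^ (m + k) * (m.choose j : ℤ) * (j.choose k : ℤ) *
          ((w + k).choose w : ℤ) * ((k + u).choose j : ℤ)
        = ((-1 : ℤ) ^ (m + k) * ((w + k).choose w : ℤ)) *
            ∑ j ∈ range (m + 1),
              (m.choose j : ℤ) * (j.choose k : ℤ) * ((k + u).choose j : ℤ) := by
      rw [Finset.mul_sum]
      apply Finset.sum_congr rfl
      intro j _
      ring
    rw [this, innerSumAux m u k (by omega)]
    ring
  rw [Finset.sum_congr rfl step4, ← Finset.mul_sum]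
  congr 1
  have : ∑ k ∈ range (m + 1),
      (-1 : ℤ) ^ (m + k) * (m.choose k : ℤ) * ((w + k).choose w : ℤ) = Faux w m w := rfl
  rw [this, Faux_diag]
end

section
/- Let β and j be integers with 0 ≤ β < j. Then ∑_{w=1}^{j} (1/w) · C(β−w, j−w) = (−1)^{β+j+1} / ( (β+1) · C(j, β+1) ), an identity of rational numbers, where C(β−w, j−w) is the generalized binomial coefficient with (possibly negative) integer top. -/
lemma prod_shift (s n : ℕ) :
    ∏ i ∈ Finset.range n, ((s : ℚ) + 1 + i) = (Nat.factorial (s + n) : ℚ) / (Nat.factorial s : ℚ) := by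
  induction n with
  | zero => simp [Nat.factorial_ne_zero]
  | succ n ih =>
      rw [Finset.prod_range_succ, ih]
      have h1 : (Nat.factorial s : ℚ) ≠ 0 := Nat.cast_ne_zero.mpr (Nat.factorial_ne_zero s)
      rw [show s + (n+1) = (s+n) + 1 from rfl, Nat.factorial_succ]
      push_cast
      field_simp
      ring

lemma keysum (m : ℕ) : ∀ s : ℕ,
    ∑ k ∈ Finset.range (m+1), (-1 : ℚ)^k * (m.choose k : ℚ) / ((s : ℚ) + 1 + k)
      = (Nat.factorial m : ℚ) / ∏ i ∈ Finset.range (m+1), ((s : ℚ) + 1 + i) := by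
  induction m with
  | zero => intro s; simp
  | succ m ih =>
      intro s
      set f : ℕ → ℚ := fun k => (-1 : ℚ)^k * (m.choose k : ℚ) / ((s : ℚ) + 1 + k) with hf
      set f' : ℕ → ℚ := fun k => (-1 : ℚ)^k * (m.choose k : ℚ) / ((s : ℚ) + 1 + 1 + k) with hf'
      set g : ℕ → ℚ := fun k => (-1 : ℚ)^k * ((m+1).choose k : ℚ) / ((s : ℚ) + 1 + k) with hg
      have hsplit : ∑ k ∈ Finset.range (m+2), g k
          = (∑ k ∈ Finset.range (m+1), f k) - ∑ k ∈ Finset.range (m+1), f' k := by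
        rw [Finset.sum_range_succ' g (m+1)]
        have h1 : ∀ i ∈ Finset.range (m+1), g (i+1) = -f' i + f (i+1) := by
          intro i _
          simp only [hf, hf', hg, Nat.choose_succ_succ]
          push_cast
          have hd : ((s : ℚ) + 1 + (i+1)) ≠ 0 := by positivity
          have hd' : ((s : ℚ) + 1 + 1 + i) ≠ 0 := by positivity
          field_simp
          ring
        rw [Finset.sum_congr rfl h1, Finset.sum_add_distrib]
        have h2 : ∑ i ∈ Finset.range (m+1), f (i+1)
            = (∑ k ∈ Finset.range (m+2), f k) - f 0 := by
          rw [Finset.sum_range_succ' f (m+1)]; ring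
        have h3 : ∑ k ∈ Finset.range (m+2), f k = ∑ k ∈ Finset.range (m+1), f k := by
          rw [Finset.sum_range_succ]
          simp [hf, Nat.choose_succ_self]
        have hg0 : g 0 = f 0 := by simp [hf, hg]
        rw [h2, h3, hg0, Finset.sum_neg_distrib]
        ring
      have hP' : ∏ i ∈ Finset.range (m+1), ((s:ℚ)+1+1+(i:ℚ))
          = (Nat.factorial (s+m+2) : ℚ) / (Nat.factorial (s+1) : ℚ) := by
        have h := prod_shift (s+1) (m+1)
        push_cast at h ⊢
        rw [show s+1+(m+1) = s+m+2 by omega] at h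
        convert h using 2
      have hP : ∏ i ∈ Finset.range (m+1), ((s:ℚ)+1+(i:ℚ))
          = (Nat.factorial (s+m+1) : ℚ) / (Nat.factorial s : ℚ) := by
        rw [prod_shift s (m+1), show s+(m+1) = s+m+1 by omega]
      have hQ : ∏ i ∈ Finset.range (m+1+1), ((s:ℚ)+1+(i:ℚ))
          = (Nat.factorial (s+m+2) : ℚ) / (Nat.factorial s : ℚ) := by
        rw [prod_shift s (m+2), show s+(m+2) = s+m+2 by omega]
      have hih' : ∑ k ∈ Finset.range (m+1), f' k
          = (Nat.factorial m : ℚ) / ((Nat.factorial (s+m+2) : ℚ) / (Nat.factorial (s+1) : ℚ)) := by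
        have h := ih (s+1)
        push_cast at h
        simp only [hf']
        rw [h, hP']
      rw [show m+1+1 = m+2 from rfl] at hQ
      rw [hsplit, ih s, hih', hP, hQ]
      have e1 : s+m+2 = (s+m+1)+1 := by omega
      rw [e1, Nat.factorial_succ (s+m+1), Nat.factorial_succ m, Nat.factorial_succ s]
      have h1 : (Nat.factorial s : ℚ) ≠ 0 := Nat.cast_ne_zero.mpr (Nat.factorial_ne_zero s)
      have h2 : (Nat.factorial (s+m+1) : ℚ) ≠ 0 := Nat.cast_ne_zero.mpr (Nat.factorial_ne_zero _)
      have h3 : ((s:ℚ)+m+1+1) ≠ 0 := by positivity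
      have h4 : ((s:ℚ)+1) ≠ 0 := by positivity
      push_cast
      field_simp
      ring

lemma descFac_neg (x : ℚ) (n : ℕ) :
    descFac (-x) n = (-1)^n * ∏ r ∈ Finset.range n, (x + r) := by
  unfold descFac
  rw [show ((-1:ℚ)^n) = ∏ _r ∈ Finset.range n, (-1:ℚ) by
    rw [Finset.prod_const, Finset.card_range]]
  rw [← Finset.prod_mul_distrib]
  exact Finset.prod_congr rfl fun r _ => by ring

/-- For `0 ≤ β < j`:
`∑_{w=1}^{j} (1/w) C(β-w, j-w) = (-1)^{β+j+1}/((β+1) C(j, β+1))`. -/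
theorem stmt_17 (β j : ℕ) (hβj : β < j) :
    ∑ w ∈ Finset.Icc 1 j, (1 / (w : ℚ)) * qchoose ((β : ℚ) - w) ((j : ℤ) - w) =
      (-1 : ℚ) ^ (β + j + 1) / (((β : ℚ) + 1) * (j.choose (β + 1) : ℚ)) := by
  obtain ⟨m, rfl⟩ : ∃ m, j = β + m + 1 := ⟨j - β - 1, by omega⟩
  set j := β + m + 1 with hj
  set F : ℕ → ℚ := fun w => (1 / (w : ℚ)) * qchoose ((β : ℚ) - w) ((j : ℤ) - w) with hF
  have hA : ∑ w ∈ Finset.Icc 1 j, F w = ∑ w ∈ Finset.Ico (β+1) (j+1), F w := by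
    refine (Finset.sum_subset ?_ ?_).symm
    · intro w hw
      simp only [Finset.mem_Ico] at hw
      simp only [Finset.mem_Icc]
      omega
    · intro w hw hw'
      simp only [Finset.mem_Icc] at hw
      simp only [Finset.mem_Ico] at hw'
      have hwβ : w ≤ β := by omega
      have hw1 : 1 ≤ w := hw.1
      have h0 : (0:ℤ) ≤ (j:ℤ) - (w:ℤ) := by
        have : (w:ℤ) ≤ (j:ℤ) := by exact_mod_cast hw.2
        omega
      have htn : ((j:ℤ) - (w:ℤ)).toNat = j - w := Int.toNat_sub' j w
      simp only [hF, qchoose, if_pos h0, htn]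
      have : descFac ((β:ℚ) - w) (j - w) = 0 := by
        apply Finset.prod_eq_zero (i := β - w)
        · simp only [Finset.mem_range]; omega
        · rw [Nat.cast_sub hwβ]; ring
      rw [this]
      simp
  have hB : ∑ w ∈ Finset.Ico (β+1) (j+1), F w = ∑ i ∈ Finset.range (m+1), F (β+1+i) := by
    rw [Finset.sum_Ico_eq_sum_range, show j+1-(β+1) = m+1 by omega]
  have hC : ∀ i ∈ Finset.range (m+1),
      F (β+1+i) = (-1:ℚ)^m * ((-1:ℚ)^i * (m.choose i : ℚ) / ((β:ℚ) + 1 + i)) := by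
    intro i hi
    simp only [Finset.mem_range] at hi
    have him : i ≤ m := by omega
    have h0 : (0:ℤ) ≤ (j:ℤ) - ((β+1+i : ℕ):ℤ) := by push_cast; omega
    have htn : ((j:ℤ) - ((β+1+i : ℕ):ℤ)).toNat = m - i := by
      rw [Int.toNat_sub' j (β+1+i)]; omega
    simp only [hF, qchoose, if_pos h0, htn]
    have hdd : ((β:ℚ) - (β+1+i : ℕ)) = -(((i:ℕ):ℚ) + 1) := by push_cast; ring
    rw [hdd, show (-(((i:ℕ):ℚ) + 1)) = -((i:ℚ)+1) from rfl, descFac_neg]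
    have hps : ∏ r ∈ Finset.range (m-i), ((i:ℚ) + 1 + r)
        = (Nat.factorial (i + (m-i)) : ℚ) / (Nat.factorial i : ℚ) := prod_shift i (m-i)
    rw [show (fun r : ℕ => ((i:ℚ)+1+(r:ℚ))) = (fun r : ℕ => ((i:ℚ)+1+(r:ℚ))) from rfl] at hps
    have hprod : ∏ r ∈ Finset.range (m-i), ((i:ℚ) + 1 + r)
        = (Nat.factorial m : ℚ) / (Nat.factorial i : ℚ) := by
      rw [hps, show i + (m-i) = m by omega]
    have hch : (m.choose i : ℚ) = (Nat.factorial m : ℚ) / ((Nat.factorial i : ℚ) * (Nat.factorial (m-i) : ℚ)) :=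
      Nat.cast_choose ℚ him
    have hsign : ((-1:ℚ)^(m-i)) = (-1:ℚ)^m * (-1:ℚ)^i := by
      rw [← pow_add, show m + i = (m-i) + 2*i by omega, pow_add, pow_mul]
      norm_num
    have hfi : (Nat.factorial i : ℚ) ≠ 0 := Nat.cast_ne_zero.mpr (Nat.factorial_ne_zero _)
    have hfmi : (Nat.factorial (m-i) : ℚ) ≠ 0 := Nat.cast_ne_zero.mpr (Nat.factorial_ne_zero _)
    have hden : (((β+1+i : ℕ) : ℚ)) = (β:ℚ) + 1 + i := by push_cast; ring
    rw [hden]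
    have hβi : ((β:ℚ) + 1 + i) ≠ 0 := by positivity
    rw [hprod, hch, hsign]
    field_simp
  rw [hA, hB, Finset.sum_congr rfl hC, ← Finset.mul_sum]
  rw [keysum m β, prod_shift β (m+1), show β + (m+1) = j from rfl]
  have hch : ((j.choose (β+1)) : ℚ)
      = (Nat.factorial j : ℚ) / ((Nat.factorial (β+1) : ℚ) * (Nat.factorial m : ℚ)) := by
    rw [Nat.cast_choose ℚ (show β+1 ≤ j by omega), show j - (β+1) = m by omega]
  have hsign : ((-1:ℚ)^(β + j + 1)) = (-1:ℚ)^m := by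
    rw [show β + j + 1 = m + 2*(β+1) by omega, pow_add, pow_mul]
    norm_num
  rw [hch, hsign, Nat.factorial_succ β]
  have h1 : (Nat.factorial β : ℚ) ≠ 0 := Nat.cast_ne_zero.mpr (Nat.factorial_ne_zero _)
  have h2 : (Nat.factorial m : ℚ) ≠ 0 := Nat.cast_ne_zero.mpr (Nat.factorial_ne_zero _)
  have h3 : (Nat.factorial j : ℚ) ≠ 0 := Nat.cast_ne_zero.mpr (Nat.factorial_ne_zero _)
  have h4 : ((β:ℚ)+1) ≠ 0 := by positivity
  push_cast
  field_simp
end
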